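/- arXiv:1802.04098 — 6 statements merged into one kernel-verified Lean document; each statement's English description precedes it below -/
import Mathlib

section
/- Let (X, μ) be a σ-finite measure space, let T > 0, and let γ : [0, T] → (X → ℝ) be such that γ(t) is measurable for every t ∈ [0, T]. Fix 0 ≤ t₁ < t₂ < t₃ ≤ T, and let V₁₂, V₂₃, V₁₃ : X → [0, ∞] be essential variations of γ over the intervals [t₁, t₂], [t₂, t₃], and [t₁, t₃] respectively. Then V₁₃ = V₁₂ + V₂₃ μ-almost everywhere on X. -/
open MeasureTheory

/-- An essential supremum of a family `(v i)` of measurable functions from `X` to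
`[-∞, ∞]` (with respect to `μ`). -/
def IsEssSupFamily {X : Type*} [MeasurableSpace X] (μ : Measure X) {I : Sort*}
    (v : I → X → EReal) (vbar : X → EReal) : Prop :=
  Measurable vbar ∧ (∀ i, ∀ᵐ x ∂μ, v i x ≤ vbar x) ∧
    ∀ w : X → EReal, Measurable w → (∀ i, ∀ᵐ x ∂μ, v i x ≤ w x) →
      ∀ᵐ x ∂μ, vbar x ≤ w x

/-- `V : X → [0, ∞]` is an essential variation of `γ` over the interval `[a, b]`:
it is an essential supremum of the family of functions
`x ↦ ∑_{i=1}^{j} |γ(s_i; x) - γ(s_{i-1}; x)|`, indexed by all finite partitions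
`a = s₀ < s₁ < ⋯ < s_j = b` of `[a, b]`. -/
def IsEssVariation {X : Type*} [MeasurableSpace X] (μ : Measure X)
    (γ : ℝ → X → ℝ) (a b : ℝ) (V : X → ENNReal) : Prop :=
  IsEssSupFamily μ
    (fun p : {p : ℕ × (ℕ → ℝ) // p.2 0 = a ∧ p.2 p.1 = b ∧ StrictMonoOn p.2 (Set.Iic p.1)} =>
      fun x =>
        ((∑ i ∈ Finset.range p.1.1, |γ (p.1.2 (i + 1)) x - γ (p.1.2 i) x| : ℝ) : EReal))
    (fun x => (V x : EReal))

namespace EssVarAux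

variable {X : Type*} [MeasurableSpace X]

/-- The type of partitions of `[a, b]`. -/
abbrev Ptn (a b : ℝ) :=
  {p : ℕ × (ℕ → ℝ) // p.2 0 = a ∧ p.2 p.1 = b ∧ StrictMonoOn p.2 (Set.Iic p.1)}

/-- The variation sum of `γ` along a partition. -/
def S (γ : ℝ → X → ℝ) {a b : ℝ} (p : Ptn a b) (x : X) : ℝ :=
  ∑ i ∈ Finset.range p.1.1, |γ (p.1.2 (i + 1)) x - γ (p.1.2 i) x|

lemma S_nonneg (γ : ℝ → X → ℝ) {a b : ℝ} (p : Ptn a b) (x : X) : 0 ≤ S γ p x :=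
  Finset.sum_nonneg fun _ _ => abs_nonneg _

lemma mem_Icc {a b : ℝ} (p : Ptn a b) {i : ℕ} (hi : i ≤ p.1.1) : p.1.2 i ∈ Set.Icc a b := by
  obtain ⟨h0, hn, hm⟩ := p.2
  constructor
  · calc a = p.1.2 0 := h0.symm
      _ ≤ p.1.2 i := hm.monotoneOn (Set.mem_Iic.2 (Nat.zero_le _)) (Set.mem_Iic.2 hi) (Nat.zero_le _)
  · calc p.1.2 i ≤ p.1.2 p.1.1 := hm.monotoneOn (Set.mem_Iic.2 hi) (Set.mem_Iic.2 le_rfl) hi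
      _ = b := hn

lemma S_measurable {T : ℝ} {γ : ℝ → X → ℝ} (hγ : ∀ t ∈ Set.Icc (0 : ℝ) T, Measurable (γ t))
    {a b : ℝ} (hab : Set.Icc a b ⊆ Set.Icc (0 : ℝ) T) (p : Ptn a b) :
    Measurable (S γ p) := by
  apply Finset.measurable_sum
  intro i hi
  have hi' : i + 1 ≤ p.1.1 := Finset.mem_range.1 hi
  exact ((hγ _ (hab (mem_Icc p hi'))).sub (hγ _ (hab (mem_Icc p (le_of_lt (Nat.lt_of_succ_le hi')))))).abs

/-- the trivial one-step partition -/
def triv {a b : ℝ} (hab : a < b) : Ptn a b :=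
  ⟨(1, fun i => if i = 0 then a else b), by simp, by simp, by
    intro i hi j hj hij
    have hi1 : i = 0 := by
      simp only [Set.mem_Iic] at hi hj; omega
    have hj1 : j = 1 := by
      simp only [Set.mem_Iic] at hi hj; omega
    simp [hi1, hj1, hab]⟩

/-- Concatenating partitions of `[a,b]` and `[b,c]`. -/
lemma concat (γ : ℝ → X → ℝ) {a b c : ℝ} (hab : a < b) (hbc : b < c)
    (q : Ptn a b) (r : Ptn b c) :
    ∃ p : Ptn a c, ∀ x, S γ p x = S γ q x + S γ r x := by
  obtain ⟨⟨m, u⟩, hu0, hum, hu⟩ := q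
  obtain ⟨⟨k, v⟩, hv0, hvk, hv⟩ := r
  simp only at hu0 hum hu hv0 hvk hv ⊢
  have hk1 : 1 ≤ k := by
    by_contra h
    have : k = 0 := by omega
    rw [this] at hvk
    exact absurd (hv0 ▸ hvk : b = c) hbc.ne
  set f : ℕ → ℝ := fun i => if i ≤ m then u i else v (i - m) with hf
  have hfm : ∀ i ≤ k, f (m + i) = v i := by
    intro i hi
    rcases Nat.eq_zero_or_pos i with rfl | hpos
    · simp only [hf, Nat.add_zero, if_pos le_rfl, hum, hv0]
    · simp only [hf, if_neg (by omega : ¬ m + i ≤ m), Nat.add_sub_cancel_left]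
  have hfu : ∀ i ≤ m, f i = u i := fun i hi => if_pos hi
  refine ⟨⟨(m + k, f), ?_, ?_, ?_⟩, ?_⟩
  · simpa using (hfu 0 (Nat.zero_le _)).trans hu0
  · simpa using (hfm k le_rfl).trans hvk
  · intro i hi j hj hij
    simp only [Set.mem_Iic] at hi hj
    show f i < f j
    by_cases hjm : j ≤ m
    · rw [hfu i (le_of_lt (lt_of_lt_of_le hij hjm)), hfu j hjm]
      exact hu (Set.mem_Iic.2 (le_of_lt (lt_of_lt_of_le hij hjm))) (Set.mem_Iic.2 hjm) hij
    · have hfj : f j = v (j - m) := if_neg hjm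
      by_cases him : i ≤ m
      · have h1 : u i ≤ b := hum ▸ hu.monotoneOn (Set.mem_Iic.2 him) (Set.mem_Iic.2 le_rfl) him
        have h2 : v 0 < v (j - m) :=
          hv (Set.mem_Iic.2 (Nat.zero_le _)) (Set.mem_Iic.2 (by omega)) (by omega)
        rw [hfu i him, hfj]
        exact lt_of_le_of_lt (le_of_le_of_eq h1 hv0.symm) h2
      · rw [hfj, show f i = v (i - m) from if_neg him]
        exact hv (Set.mem_Iic.2 (by omega)) (Set.mem_Iic.2 (by omega)) (by omega)
  · intro x
    simp only [S, Finset.sum_range_add]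
    congr 1
    · apply Finset.sum_congr rfl
      intro i hi
      have hi' : i + 1 ≤ m := Finset.mem_range.1 hi
      rw [hfu (i + 1) hi', hfu i (by omega)]
    · apply Finset.sum_congr rfl
      intro i hi
      have hi' : i + 1 ≤ k := Finset.mem_range.1 hi
      rw [show m + i + 1 = m + (i + 1) by omega, hfm (i + 1) hi', hfm i (by omega)]

/-- Splitting a partition of `[a,c]` at `b`. -/
lemma split (γ : ℝ → X → ℝ) {a b c : ℝ} (hab : a < b) (hbc : b < c) (p : Ptn a c) :
    ∃ q : Ptn a b, ∃ r : Ptn b c, ∀ x, S γ p x ≤ S γ q x + S γ r x := by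
  obtain ⟨⟨n, s⟩, hs0, hsn, hs⟩ := p
  simp only at hs0 hsn hs ⊢
  by_cases hA : ∃ m ≤ n, s m = b
  · obtain ⟨m, hmn, hmb⟩ := hA
    refine ⟨⟨(m, s), hs0, hmb, hs.mono (Set.Iic_subset_Iic.2 hmn)⟩,
      ⟨(n - m, fun i => s (m + i)), by simpa using hmb, ?_, ?_⟩, ?_⟩
    · simp only [Nat.add_sub_cancel' hmn, hsn]
    · intro i hi j hj hij
      simp only [Set.mem_Iic] at hi hj
      show s (m + i) < s (m + j)
      exact hs (Set.mem_Iic.2 (by omega)) (Set.mem_Iic.2 (by omega)) (by omega)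
    · intro x
      simp only [S]
      obtain ⟨M, hM1, hM2⟩ : ∃ M, n - m = M ∧ n = m + M := ⟨n - m, rfl, by omega⟩
      rw [hM1, hM2, Finset.sum_range_add]
      apply le_of_eq
      congr 1
  · push_neg at hA
    classical
    set k := Nat.findGreatest (fun i => s i < b) n with hk
    have hkn' : k ≤ n := Nat.findGreatest_le n
    have hsk : s k < b := Nat.findGreatest_spec (P := fun i => s i < b) (Nat.zero_le n) (show s 0 < b by rw [hs0]; exact hab)
    have hkn : k < n := by
      rcases lt_or_eq_of_le hkn' with h | h
      · exact h
      · exact absurd (h ▸ hsk) (by rw [hsn]; exact not_lt.2 (le_of_lt hbc))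
    have hsk1 : b < s (k + 1) := by
      have h1 : ¬ s (k + 1) < b := Nat.findGreatest_is_greatest (P := fun i => s i < b) (Nat.lt_succ_self k) (by omega)
      have h2 : s (k + 1) ≠ b := hA (k + 1) (by omega)
      exact lt_of_le_of_ne (not_lt.1 h1) (Ne.symm h2)
    set u : ℕ → ℝ := fun i => if i ≤ k then s i else b with hu
    set v : ℕ → ℝ := fun i => if i = 0 then b else s (k + i) with hv
    have hmono : MonotoneOn s (Set.Iic n) := hs.monotoneOn
    refine ⟨⟨(k + 1, u), ?_, ?_, ?_⟩, ⟨(n - k, v), ?_, ?_, ?_⟩, ?_⟩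
    · simpa [hu] using hs0
    · simp [hu]
    · intro i hi j hj hij
      simp only [Set.mem_Iic] at hi hj
      show u i < u j
      by_cases hjk : j ≤ k
      · simp only [hu, if_pos hjk, if_pos (by omega : i ≤ k)]
        exact hs (Set.mem_Iic.2 (by omega)) (Set.mem_Iic.2 (by omega)) hij
      · have hik : i ≤ k := by omega
        simp only [hu, if_pos hik, if_neg hjk]
        exact lt_of_le_of_lt
          (hmono (Set.mem_Iic.2 (by omega)) (Set.mem_Iic.2 (by omega)) hik) hsk
    · simp [hv]
    · simp only [hv, if_neg (by omega : ¬ n - k = 0), Nat.add_sub_cancel' (le_of_lt hkn), hsn]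
    · intro i hi j hj hij
      simp only [Set.mem_Iic] at hi hj
      show v i < v j
      have hj0 : j ≠ 0 := by omega
      simp only [hv, if_neg hj0]
      by_cases hi0 : i = 0
      · simp only [hi0, if_pos rfl]
        exact lt_of_lt_of_le hsk1
          (hmono (Set.mem_Iic.2 (by omega)) (Set.mem_Iic.2 (by omega)) (by omega))
      · simp only [if_neg hi0]
        exact hs (Set.mem_Iic.2 (by omega)) (Set.mem_Iic.2 (by omega)) (by omega)
    · intro x
      simp only [S]
      obtain ⟨M, hM1, hM2⟩ : ∃ M, n - k = 1 + M ∧ n = (k + 1) + M := ⟨n - k - 1, by omega, by omega⟩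
      have hL : ∑ i ∈ Finset.range n, |γ (s (i + 1)) x - γ (s i) x|
          = (∑ i ∈ Finset.range k, |γ (s (i + 1)) x - γ (s i) x|)
            + |γ (s (k + 1)) x - γ (s k) x|
            + ∑ i ∈ Finset.range M, |γ (s (k + 1 + i + 1)) x - γ (s (k + 1 + i)) x| := by
        rw [hM2, Finset.sum_range_add, Finset.sum_range_succ]
      have hQ : ∑ i ∈ Finset.range (k + 1), |γ (u (i + 1)) x - γ (u i) x|
          = (∑ i ∈ Finset.range k, |γ (s (i + 1)) x - γ (s i) x|) + |γ b x - γ (s k) x| := by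
        rw [Finset.sum_range_succ]
        congr 1
        · apply Finset.sum_congr rfl
          intro i hi
          have hi' : i + 1 ≤ k := Finset.mem_range.1 hi
          rw [hu]
          simp only [if_pos hi', if_pos (by omega : i ≤ k)]
        · rw [hu]
          simp only [if_neg (by omega : ¬ k + 1 ≤ k), if_pos le_rfl]
      have hR : ∑ i ∈ Finset.range (n - k), |γ (v (i + 1)) x - γ (v i) x|
          = |γ (s (k + 1)) x - γ b x|
            + ∑ i ∈ Finset.range M, |γ (s (k + 1 + i + 1)) x - γ (s (k + 1 + i)) x| := by
        rw [hM1, Finset.sum_range_add, Finset.sum_range_one]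
        congr 1
        apply Finset.sum_congr rfl
        intro i _
        have e1 : v (1 + i) = s (k + 1 + i) := by
          rw [hv]
          simp only [if_neg (show ¬ 1 + i = 0 by omega)]
          congr 1
          omega
        have e2 : v (1 + i + 1) = s (k + 1 + i + 1) := by
          rw [hv]
          simp only [if_neg (show ¬ 1 + i + 1 = 0 by omega)]
          congr 1
          omega
        rw [e1, e2]
      rw [hL, hQ, hR]
      have tri := abs_sub_le (γ (s (k + 1)) x) (γ b x) (γ (s k) x)
      linarith

end EssVarAux

open EssVarAux

/-- Additivity of the essential variation: if `V₁₂`, `V₂₃`, `V₁₃` are essential variations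
of `γ` over `[t₁, t₂]`, `[t₂, t₃]`, `[t₁, t₃]` respectively, then
`V₁₃ = V₁₂ + V₂₃` `μ`-a.e. -/
theorem essVariation_add {X : Type*} [MeasurableSpace X] (μ : Measure X) [SigmaFinite μ]
    (T : ℝ) (hT : 0 < T) (γ : ℝ → X → ℝ)
    (hγ : ∀ t ∈ Set.Icc (0 : ℝ) T, Measurable (γ t))
    (t₁ t₂ t₃ : ℝ) (h₀ : 0 ≤ t₁) (h₁₂ : t₁ < t₂) (h₂₃ : t₂ < t₃) (h₃ : t₃ ≤ T)
    (V₁₂ V₂₃ V₁₃ : X → ENNReal)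
    (hV₁₂ : IsEssVariation μ γ t₁ t₂ V₁₂)
    (hV₂₃ : IsEssVariation μ γ t₂ t₃ V₂₃)
    (hV₁₃ : IsEssVariation μ γ t₁ t₃ V₁₃) :
    ∀ᵐ x ∂μ, V₁₃ x = V₁₂ x + V₂₃ x := by
  unfold IsEssVariation IsEssSupFamily at hV₁₂ hV₂₃ hV₁₃
  obtain ⟨m12, ub12, lub12⟩ := hV₁₂
  obtain ⟨m23, ub23, lub23⟩ := hV₂₃
  obtain ⟨m13, ub13, lub13⟩ := hV₁₃
  have hemb : MeasurableEmbedding ((↑) : ENNReal → EReal) :=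
    continuous_coe_ennreal_ereal.measurableEmbedding EReal.coe_ennreal_injective
  have mV12 : Measurable V₁₂ := hemb.measurable_comp_iff.1 m12
  have mV23 : Measurable V₂₃ := hemb.measurable_comp_iff.1 m23
  have mV13 : Measurable V₁₃ := hemb.measurable_comp_iff.1 m13
  have hconv : ∀ (r : ℝ), 0 ≤ r → ∀ (a : ENNReal),
      (((r : ℝ) : EReal) ≤ (a : EReal) ↔ ENNReal.ofReal r ≤ a) := by
    intro r hr a
    rw [← EReal.coe_ennreal_le_coe_ennreal_iff, EReal.coe_ennreal_ofReal, max_eq_left hr]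
  have hIcc23 : Set.Icc t₂ t₃ ⊆ Set.Icc (0 : ℝ) T :=
    Set.Icc_subset_Icc (le_trans h₀ h₁₂.le) h₃
  -- the `≤` direction
  have hle : ∀ᵐ x ∂μ, V₁₃ x ≤ V₁₂ x + V₂₃ x := by
    have hub : ∀ p : Ptn t₁ t₃, ∀ᵐ x ∂μ,
        ((S γ p x : ℝ) : EReal) ≤ ((V₁₂ x + V₂₃ x : ENNReal) : EReal) := by
      intro p
      obtain ⟨q, r, hqr⟩ := split γ h₁₂ h₂₃ p
      filter_upwards [ub12 q, ub23 r] with x h1 h2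
      calc ((S γ p x : ℝ) : EReal) ≤ ((S γ q x + S γ r x : ℝ) : EReal) := by
            exact_mod_cast hqr x
        _ = ((S γ q x : ℝ) : EReal) + ((S γ r x : ℝ) : EReal) := by exact_mod_cast rfl
        _ ≤ (V₁₂ x : EReal) + (V₂₃ x : EReal) := add_le_add h1 h2
        _ = ((V₁₂ x + V₂₃ x : ENNReal) : EReal) := (EReal.coe_ennreal_add _ _).symm
    have h := lub13 (fun x => ((V₁₂ x + V₂₃ x : ENNReal) : EReal))
      ((mV12.add mV23).coe_ereal_ennreal) hub
    filter_upwards [h] with x hx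
    exact EReal.coe_ennreal_le_coe_ennreal_iff.1 hx
  -- the `≥` direction, step 1
  have key : ∀ (q : Ptn t₁ t₂) (r : Ptn t₂ t₃), ∀ᵐ x ∂μ,
      ENNReal.ofReal (S γ q x) + ENNReal.ofReal (S γ r x) ≤ V₁₃ x := by
    intro q r
    obtain ⟨p, hp⟩ := concat γ h₁₂ h₂₃ q r
    filter_upwards [ub13 p] with x hx
    rw [← ENNReal.ofReal_add (S_nonneg γ q x) (S_nonneg γ r x), ← hp x]
    exact (hconv _ (S_nonneg γ p x) _).1 hx
  -- step 2
  have key2 : ∀ r : Ptn t₂ t₃, ∀ᵐ x ∂μ,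
      V₁₂ x + ENNReal.ofReal (S γ r x) ≤ V₁₃ x := by
    intro r
    have hmr : Measurable (S γ r) := S_measurable hγ hIcc23 r
    have hub : ∀ q : Ptn t₁ t₂, ∀ᵐ x ∂μ, ((S γ q x : ℝ) : EReal)
        ≤ ((V₁₃ x - ENNReal.ofReal (S γ r x) : ENNReal) : EReal) := by
      intro q
      filter_upwards [key q r] with x hx
      exact (hconv _ (S_nonneg γ q x) _).2
        (ENNReal.le_sub_of_add_le_right ENNReal.ofReal_ne_top hx)
    have h := lub12 (fun x => ((V₁₃ x - ENNReal.ofReal (S γ r x) : ENNReal) : EReal))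
      ((mV13.sub hmr.ennreal_ofReal).coe_ereal_ennreal) hub
    filter_upwards [h, key (triv h₁₂) r] with x h1 h2
    have h1' : V₁₂ x ≤ V₁₃ x - ENNReal.ofReal (S γ r x) :=
      EReal.coe_ennreal_le_coe_ennreal_iff.1 h1
    have hr13 : ENNReal.ofReal (S γ r x) ≤ V₁₃ x := le_trans (self_le_add_left _ _) h2
    calc V₁₂ x + ENNReal.ofReal (S γ r x)
        ≤ (V₁₃ x - ENNReal.ofReal (S γ r x)) + ENNReal.ofReal (S γ r x) :=
          add_le_add_left h1' _
      _ = V₁₃ x := tsub_add_cancel_of_le hr13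
  -- `V₁₂ ≤ V₁₃` a.e.
  have h12le13 : ∀ᵐ x ∂μ, V₁₂ x ≤ V₁₃ x := by
    filter_upwards [key2 (triv h₂₃)] with x hx
    exact le_trans le_self_add hx
  -- step 3
  classical
  set g : X → ENNReal := fun x => if V₁₂ x = ⊤ then ⊤ else V₁₃ x - V₁₂ x with hgdef
  have hge : ∀ᵐ x ∂μ, V₂₃ x ≤ g x := by
    have hgm : Measurable (fun x => ((g x : ENNReal) : EReal)) :=
      Measurable.coe_ereal_ennreal <| (Measurable.ite (mV12 (measurableSet_singleton ⊤))
        measurable_const (mV13.sub mV12) : Measurable g)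
    have hub : ∀ r : Ptn t₂ t₃, ∀ᵐ x ∂μ, ((S γ r x : ℝ) : EReal)
        ≤ ((g x : ENNReal) : EReal) := by
      intro r
      filter_upwards [key2 r] with x hx
      apply (hconv _ (S_nonneg γ r x) _).2
      by_cases h12t : V₁₂ x = ⊤
      · rw [hgdef]
        simp only [if_pos h12t]
        exact le_top
      · rw [hgdef]
        simp only [if_neg h12t]
        exact ENNReal.le_sub_of_add_le_left h12t hx
    have h := lub23 _ hgm hub
    filter_upwards [h] with x hx
    exact EReal.coe_ennreal_le_coe_ennreal_iff.1 hx
  filter_upwards [hle, hge, h12le13] with x hx1 hx2 hx3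
  refine le_antisymm hx1 ?_
  by_cases h12t : V₁₂ x = ⊤
  · rw [h12t] at hx3 ⊢
    rw [top_le_iff.1 hx3]
    simp
  · rw [hgdef] at hx2
    simp only [if_neg h12t] at hx2
    calc V₁₂ x + V₂₃ x ≤ V₁₂ x + (V₁₃ x - V₁₂ x) := add_le_add_right hx2 _
      _ = V₁₃ x := add_tsub_cancel_of_le hx3
end

section
/- Let (X, μ) be a σ-finite measure space, let T > 0, let γ' : [0, T] → L²(X, μ; ℝ) be Bochner integrable, and let γ : [0, T] → L²(X, μ; ℝ) satisfy γ(t) = γ(0) + ∫₀ᵗ γ'(τ) dτ (Bochner integral in L²) for every t ∈ [0, T]. Choose for each t ∈ [0, T] a measurable representative of γ(t). Then for every 0 ≤ s ≤ t ≤ T, any essential variation V of γ over [s, t] satisfies V ≤ ∫ₛᵗ |γ'(τ)| dτ μ-almost everywhere on X (the right-hand side being any representative of the Bochner integral in L² of τ ↦ |γ'(τ)|); in particular V is μ-a.e. finite, V ∈ L²(X, μ; ℝ), and ‖V‖_{L²(X,μ)} ≤ ∫ₛᵗ ‖γ'(τ)‖_{L²(X,μ)} dτ. -/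
open MeasureTheory intervalIntegral

section Aux

variable {X : Type*} [MeasurableSpace X] {μ : Measure X}

lemma lpCoeFn_sum {ι : Type*} (s : Finset ι) (f : ι → Lp ℝ 2 μ) :
    ⇑(∑ i ∈ s, f i) =ᵐ[μ] fun x => ∑ i ∈ s, f i x := by
  classical
  induction s using Finset.induction_on with
  | empty => simp only [Finset.sum_empty]; exact Lp.coeFn_zero ℝ 2 μ
  | @insert a s' h ih =>
      rw [Finset.sum_insert h]
      filter_upwards [Lp.coeFn_add (f a) (∑ i ∈ s', f i), ih] with x hx hx2
      simp only [hx, Pi.add_apply, hx2, Finset.sum_insert h]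

lemma lp_integral_nonneg {α : Type*} [MeasurableSpace α] {ν : Measure α}
    {f : α → Lp ℝ 2 μ} (hf : ∀ᵐ a ∂ν, 0 ≤ f a) :
    0 ≤ ∫ a, f a ∂ν := by
  rw [integral_eq_setToFun]
  refine setToFun_nonneg (dominatedFinMeasAdditive_weightedSMul ν) (fun u _ _ x hx => ?_) hf
  rw [weightedSMul_apply]
  have hx' := (Lp.coeFn_le (0 : Lp ℝ 2 μ) x).mpr hx
  refine (Lp.coeFn_le _ _).mp ?_
  filter_upwards [Lp.coeFn_smul (ν.real u) x, Lp.coeFn_zero ℝ 2 μ, hx'] with y h1 h2 h3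
  rw [h2] at h3 ⊢
  rw [h1]
  exact mul_nonneg ENNReal.toReal_nonneg h3

lemma lp_integral_mono {α : Type*} [MeasurableSpace α] {ν : Measure α} {f g : α → Lp ℝ 2 μ}
    (hf : Integrable f ν) (hg : Integrable g ν) (h : ∀ᵐ a ∂ν, f a ≤ g a) :
    ∫ a, f a ∂ν ≤ ∫ a, g a ∂ν := by
  rw [← sub_nonneg, ← integral_sub hg hf]
  exact lp_integral_nonneg (h.mono fun a ha => sub_nonneg.2 ha)

lemma lp_intervalIntegral_mono {u v : ℝ} (huv : u ≤ v) {f g : ℝ → Lp ℝ 2 μ}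
    (hf : IntervalIntegrable f volume u v) (hg : IntervalIntegrable g volume u v)
    (h : ∀ τ, f τ ≤ g τ) :
    (∫ τ in u..v, f τ) ≤ ∫ τ in u..v, g τ := by
  rw [integral_of_le huv, integral_of_le huv]
  exact lp_integral_mono hf.1 hg.1 (Filter.Eventually.of_forall fun a => h a)

end Aux

/-- If `γ : [0, T] → L²(X, μ)` is absolutely continuous with Bochner integrable derivative
`γ'`, `γrep t` is a measurable representative of `γ t` for each `t ∈ [0, T]`, and `V` is an
essential variation of `γrep` over `[s, t] ⊆ [0, T]`, then `V ≤ ∫ₛᵗ |γ'(τ)| dτ` `μ`-a.e.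
(for any representative `G` of the Bochner integral `∫ₛᵗ |γ'(τ)| dτ ∈ L²`); in particular
`V` is `μ`-a.e. finite, `V ∈ L²(X, μ)` and `‖V‖_{L²} ≤ ∫ₛᵗ ‖γ'(τ)‖_{L²} dτ`. -/
theorem essVariation_le_integral_abs_deriv {X : Type*} [MeasurableSpace X] (μ : Measure X)
    [SigmaFinite μ] (T : ℝ) (hT : 0 < T)
    (γ γ' : ℝ → Lp ℝ 2 μ)
    (hint : IntegrableOn γ' (Set.Icc 0 T))
    (hγ : ∀ t ∈ Set.Icc (0 : ℝ) T, γ t = γ 0 + ∫ τ in (0 : ℝ)..t, γ' τ)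
    (γrep : ℝ → X → ℝ)
    (hrep : ∀ t ∈ Set.Icc (0 : ℝ) T, Measurable (γrep t) ∧ γrep t =ᵐ[μ] γ t)
    (s t : ℝ) (hs : 0 ≤ s) (hst : s ≤ t) (ht : t ≤ T)
    (V : X → ENNReal) (hV : IsEssVariation μ γrep s t V) :
    (∀ G : X → ℝ, G =ᵐ[μ] (↑(∫ τ in s..t, |γ' τ|) : X → ℝ) →
        ∀ᵐ x ∂μ, (V x : EReal) ≤ ((G x : ℝ) : EReal)) ∧
      (∀ᵐ x ∂μ, V x ≠ ⊤) ∧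
      MemLp (fun x => (V x).toReal) 2 μ ∧
      eLpNorm (fun x => (V x).toReal) 2 μ ≤ ENNReal.ofReal (∫ τ in s..t, ‖γ' τ‖) := by
  classical
  -- interval integrability
  have hII : ∀ u ∈ Set.Icc (0 : ℝ) T, ∀ v ∈ Set.Icc (0 : ℝ) T,
      IntervalIntegrable γ' volume u v := by
    intro u hu v hv
    rw [intervalIntegrable_iff]
    refine hint.mono_set fun x hx => ?_
    rw [Set.uIoc] at hx
    exact ⟨(le_min hu.1 hv.1).trans hx.1.le, hx.2.trans (max_le hu.2 hv.2)⟩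
  have hcont : Continuous (fun a : Lp ℝ 2 μ => |a|) := continuous_id.sup continuous_neg
  have hIIabs : ∀ u ∈ Set.Icc (0 : ℝ) T, ∀ v ∈ Set.Icc (0 : ℝ) T,
      IntervalIntegrable (fun τ => |γ' τ|) volume u v := by
    intro u hu v hv
    have h1 := intervalIntegrable_iff.mp (hII u hu v hv)
    rw [intervalIntegrable_iff]
    refine Integrable.mono h1 (hcont.comp_aestronglyMeasurable h1.aestronglyMeasurable) ?_
    exact Filter.Eventually.of_forall fun τ => by rw [norm_abs_eq_norm]
  -- key L² inequality on subintervals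
  have key : ∀ u v, u ∈ Set.Icc (0 : ℝ) T → v ∈ Set.Icc (0 : ℝ) T → u ≤ v →
      |γ v - γ u| ≤ ∫ τ in u..v, |γ' τ| := by
    intro u v hu hv huv
    have h0 : (0 : ℝ) ∈ Set.Icc (0 : ℝ) T := ⟨le_refl 0, hT.le⟩
    have hdiff : γ v - γ u = ∫ τ in u..v, γ' τ := by
      rw [hγ v hv, hγ u hu]
      have h2 : (γ 0 + ∫ τ in (0 : ℝ)..v, γ' τ) - (γ 0 + ∫ τ in (0 : ℝ)..u, γ' τ)
          = (∫ τ in (0 : ℝ)..v, γ' τ) - ∫ τ in (0 : ℝ)..u, γ' τ := by abel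
      rw [h2, integral_interval_sub_left (hII 0 h0 v hv) (hII 0 h0 u hu)]
    have h1 : γ v - γ u ≤ ∫ τ in u..v, |γ' τ| := by
      rw [hdiff]
      exact lp_intervalIntegral_mono huv (hII u hu v hv) (hIIabs u hu v hv)
        fun τ => le_abs_self _
    have h2 : -(γ v - γ u) ≤ ∫ τ in u..v, |γ' τ| := by
      rw [hdiff, ← intervalIntegral.integral_neg]
      exact lp_intervalIntegral_mono huv (hII u hu v hv).neg (hIIabs u hu v hv)
        fun τ => neg_le_abs _
    exact abs_le'.mpr ⟨h1, h2⟩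
  -- pointwise a.e. version
  have keyae : ∀ u v, u ∈ Set.Icc (0 : ℝ) T → v ∈ Set.Icc (0 : ℝ) T → u ≤ v →
      ∀ᵐ x ∂μ, |γrep v x - γrep u x| ≤ (↑(∫ τ in u..v, |γ' τ|) : X → ℝ) x := by
    intro u v hu hv huv
    have h := (Lp.coeFn_le _ _).mpr (key u v hu hv huv)
    filter_upwards [h, Lp.coeFn_abs (γ v - γ u), Lp.coeFn_sub (γ v) (γ u),
      (hrep u hu).2, (hrep v hv).2] with x h1 h2 h3 h4 h5
    rw [h5, h4, ← Pi.sub_apply (⇑(γ v)) (⇑(γ u)), ← h3, ← h2]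
    exact h1
  set W : Lp ℝ 2 μ := ∫ τ in s..t, |γ' τ| with hW
  have hWaem : AEMeasurable (⇑W) μ := (Lp.aestronglyMeasurable W).aemeasurable
  set Wm : X → ℝ := hWaem.mk _ with hWmdef
  have hWmMeas : Measurable Wm := hWaem.measurable_mk
  have hWmEq : ⇑W =ᵐ[μ] Wm := hWaem.ae_eq_mk
  -- the essential-variation bound
  have hpart : ∀ p : {p : ℕ × (ℕ → ℝ) //
        p.2 0 = s ∧ p.2 p.1 = t ∧ StrictMonoOn p.2 (Set.Iic p.1)},
      ∀ᵐ x ∂μ,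
        (∑ i ∈ Finset.range p.1.1, |γrep (p.1.2 (i + 1)) x - γrep (p.1.2 i) x|) ≤ Wm x := by
    rintro ⟨⟨n, a⟩, ha0, han, hmono⟩
    have ha0' : a 0 = s := ha0
    have han' : a n = t := han
    have hmono' : StrictMonoOn a (Set.Iic n) := hmono
    have hmem : ∀ i ≤ n, a i ∈ Set.Icc (0 : ℝ) T := by
      intro i hi
      have h1 : a 0 ≤ a i := hmono'.monotoneOn (Set.mem_Iic.2 (Nat.zero_le n))
        (Set.mem_Iic.2 hi) (Nat.zero_le i)
      have h2 : a i ≤ a n := hmono'.monotoneOn (Set.mem_Iic.2 hi) (Set.mem_Iic.2 le_rfl) hi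
      rw [ha0'] at h1; rw [han'] at h2
      exact ⟨hs.trans h1, h2.trans ht⟩
    have hle : ∀ i, i < n → a i ≤ a (i + 1) := fun i hi =>
      (hmono' (Set.mem_Iic.2 hi.le) (Set.mem_Iic.2 hi) (Nat.lt_succ_self i)).le
    have hsum : ∑ i ∈ Finset.range n, ∫ τ in a i..a (i + 1), |γ' τ| = W := by
      rw [hW, ← ha0', ← han']
      exact intervalIntegral.sum_integral_adjacent_intervals fun k hk =>
        hIIabs _ (hmem k hk.le) _ (hmem (k + 1) hk)
    have hae : ∀ᵐ x ∂μ, ∀ i, i < n →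
        |γrep (a (i + 1)) x - γrep (a i) x|
          ≤ (↑(∫ τ in a i..a (i + 1), |γ' τ|) : X → ℝ) x := by
      rw [ae_all_iff]
      intro i
      by_cases hi : i < n
      · exact (keyae (a i) (a (i + 1)) (hmem i hi.le) (hmem (i + 1) hi) (hle i hi)).mono
          fun x hx _ => hx
      · exact Filter.Eventually.of_forall fun x h => absurd h hi
    filter_upwards [hae,
      lpCoeFn_sum (Finset.range n) (fun i => ∫ τ in a i..a (i + 1), |γ' τ|), hWmEq]
      with x h1 h2 h3
    calc ∑ i ∈ Finset.range n, |γrep (a (i + 1)) x - γrep (a i) x|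
        ≤ ∑ i ∈ Finset.range n, (↑(∫ τ in a i..a (i + 1), |γ' τ|) : X → ℝ) x :=
          Finset.sum_le_sum fun i hi => h1 i (Finset.mem_range.mp hi)
      _ = (↑(∑ i ∈ Finset.range n, ∫ τ in a i..a (i + 1), |γ' τ|) : X → ℝ) x := h2.symm
      _ = ⇑W x := by rw [hsum]
      _ = Wm x := h3
  have hVle : ∀ᵐ x ∂μ, (V x : EReal) ≤ ((Wm x : ℝ) : EReal) := by
    refine hV.2.2 (fun x => ((Wm x : ℝ) : EReal)) (measurable_coe_real_ereal.comp hWmMeas) ?_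
    intro p
    filter_upwards [hpart p] with x hx
    exact EReal.coe_le_coe_iff.mpr hx
  have hfin : ∀ᵐ x ∂μ, V x ≠ ⊤ := by
    filter_upwards [hVle] with x h1 hx
    rw [hx, EReal.coe_ennreal_top] at h1
    exact EReal.coe_ne_top _ (top_le_iff.mp h1)
  have hbound : ∀ᵐ x ∂μ, (V x).toReal ≤ Wm x ∧ 0 ≤ Wm x := by
    filter_upwards [hVle] with x h1
    have hWm0 : 0 ≤ Wm x := by
      have h0 : ((0 : ℝ) : EReal) ≤ ((Wm x : ℝ) : EReal) :=
        le_trans (by simpa using EReal.coe_ennreal_nonneg (V x)) h1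
      exact EReal.coe_le_coe_iff.mp h0
    refine ⟨?_, hWm0⟩
    have h2 := EReal.toReal_le_toReal h1 (EReal.coe_ennreal_ne_bot _) (EReal.coe_ne_top _)
    rwa [EReal.toReal_coe_ennreal, EReal.toReal_coe] at h2
  have hnorm : ∀ᵐ x ∂μ, ‖(V x).toReal‖ ≤ ‖(↑W : X → ℝ) x‖ := by
    filter_upwards [hbound, hWmEq] with x h1 h2
    rw [Real.norm_eq_abs, Real.norm_eq_abs, abs_of_nonneg ENNReal.toReal_nonneg, h2]
    exact h1.1.trans (le_abs_self _)
  have hVmeas : AEStronglyMeasurable (fun x => (V x).toReal) μ := by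
    have h1 : Measurable fun x => ((V x : EReal)) := hV.1
    have h2 : (fun x => (V x).toReal) = fun x => ((V x : EReal)).toReal := by
      funext x; rw [EReal.toReal_coe_ennreal]
    rw [h2]
    exact h1.ereal_toReal.aestronglyMeasurable
  refine ⟨?_, hfin, ?_, ?_⟩
  · intro G hG
    filter_upwards [hVle, hWmEq, hG] with x h1 h2 h3
    rw [h3, h2]
    exact h1
  · exact MemLp.of_le (Lp.memLp W) hVmeas hnorm
  · calc eLpNorm (fun x => (V x).toReal) 2 μ ≤ eLpNorm (⇑W) 2 μ := eLpNorm_mono_ae hnorm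
      _ = ENNReal.ofReal ‖W‖ := by
          rw [Lp.norm_def, ENNReal.ofReal_toReal (Lp.eLpNorm_ne_top W)]
      _ ≤ ENNReal.ofReal (∫ τ in s..t, ‖γ' τ‖) := by
          refine ENNReal.ofReal_le_ofReal ?_
          calc ‖W‖ ≤ ∫ τ in s..t, ‖|γ' τ|‖ :=
                intervalIntegral.norm_integral_le_integral_norm hst
            _ = ∫ τ in s..t, ‖γ' τ‖ := by simp only [norm_abs_eq_norm]
end

section
/- Let (X, μ) be a σ-finite measure space, let T > 0, let γ' : [0, T] → L²(X, μ; ℝ) be Bochner integrable, and let γ : [0, T] → L²(X, μ; ℝ) satisfy γ(t) = γ(0) + ∫₀ᵗ γ'(τ) dτ (Bochner integral in L²) for every t ∈ [0, T]. Choose for each t ∈ [0, T] a measurable representative of γ(t), and for 0 ≤ a ≤ b ≤ T let essVar(γ; a, b) denote an essential variation of γ over [a, b]. Then for almost every t ∈ [0, T]: as s → t with s ≠ t, the functions (1/|t − s|) · essVar(γ; min(s,t), max(s,t)) converge to |γ'(t)| strongly in L²(X, μ; ℝ). -/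
open MeasureTheory intervalIntegral Filter
open scoped ENNReal NNReal

section Aux

lemma lipschitzWith_abs_lattice {E : Type*} [NormedAddCommGroup E] [Lattice E] [HasSolidNorm E]
    [IsOrderedAddMonoid E] :
    LipschitzWith 1 (fun u : E => |u|) :=
  LipschitzWith.of_dist_le_mul fun a b => by
    rw [NNReal.coe_one, one_mul, dist_eq_norm, dist_eq_norm]
    exact norm_abs_sub_abs a b

variable {X : Type*} [MeasurableSpace X] {μ : Measure X} {p : ℝ≥0∞} [Fact (1 ≤ p)]

instance : PosSMulMono ℝ (Lp ℝ p μ) :=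
  PosSMulMono.of_pos fun c hc f g hfg => by
    have h := (Lp.coeFn_le f g).mpr hfg
    rw [← Lp.coeFn_le]
    filter_upwards [h, Lp.coeFn_smul c f, Lp.coeFn_smul c g] with x hx h1 h2
    rw [h1, h2, Pi.smul_apply, Pi.smul_apply, smul_eq_mul, smul_eq_mul]
    exact mul_le_mul_of_nonneg_left hx hc.le

variable {α : Type*} [MeasurableSpace α] {ν : Measure α}

lemma integral_nonneg_Lp [IsFiniteMeasure ν] {f : α → Lp ℝ p μ}
    (hf : ∀ τ, 0 ≤ f τ) : 0 ≤ ∫ τ, f τ ∂ν := by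
  by_cases hfi : Integrable f ν
  · rcases eq_or_ne ν 0 with rfl | hν
    · simp
    · haveI : NeZero ν := ⟨hν⟩
      have hmem : (⨍ τ, f τ ∂ν) ∈ Set.Ici (0 : Lp ℝ p μ) :=
        (convex_Ici (0 : Lp ℝ p μ)).average_mem isClosed_Ici
          (Filter.Eventually.of_forall hf) hfi
      have hc : (0:ℝ) < (ν Set.univ).toReal :=
        ENNReal.toReal_pos (by simpa [Measure.measure_univ_eq_zero] using hν)
          (measure_ne_top _ _)
      have h2 := smul_nonneg hc.le (Set.mem_Ici.mp hmem)
      rwa [average_eq, measureReal_def, smul_inv_smul₀ hc.ne'] at h2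
  · rw [integral_undef hfi]

lemma integral_mono_Lp [IsFiniteMeasure ν] {f g : α → Lp ℝ p μ}
    (hfi : Integrable f ν) (hgi : Integrable g ν) (h : ∀ τ, f τ ≤ g τ) :
    ∫ τ, f τ ∂ν ≤ ∫ τ, g τ ∂ν := by
  have h2 := integral_nonneg_Lp (ν := ν) (f := fun τ => g τ - f τ)
    (fun τ => sub_nonneg.2 (h τ))
  rwa [integral_sub hgi hfi, sub_nonneg] at h2

lemma integrable_abs_Lp {f : α → Lp ℝ p μ} (hfi : Integrable f ν) :
    Integrable (fun τ => |f τ|) ν :=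
  hfi.mono
    (lipschitzWith_abs_lattice.continuous.comp_aestronglyMeasurable hfi.aestronglyMeasurable)
    (Filter.Eventually.of_forall fun τ => le_of_eq (norm_abs_eq_norm _))

lemma abs_integral_le_Lp [IsFiniteMeasure ν] {f : α → Lp ℝ p μ} (hfi : Integrable f ν) :
    |∫ τ, f τ ∂ν| ≤ ∫ τ, |f τ| ∂ν := by
  have habs := integrable_abs_Lp hfi
  refine abs_le'.mpr ⟨integral_mono_Lp hfi habs fun τ => le_abs_self _, ?_⟩
  have h2 := integral_mono_Lp (f := fun τ => -(f τ)) (g := fun τ => |f τ|)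
    (hfi.neg) habs fun τ => (le_abs_self (-(f τ))).trans_eq (abs_neg _)
  rwa [MeasureTheory.integral_neg] at h2

lemma Lp.coeFn_sum' {ι : Type*} (s : Finset ι) (F : ι → Lp ℝ p μ) :
    ⇑(∑ i ∈ s, F i) =ᵐ[μ] fun x => ∑ i ∈ s, F i x := by
  classical
  refine Finset.induction_on s ?_ ?_
  · simp only [Finset.sum_empty]; exact Lp.coeFn_zero ℝ p μ
  · intro i s his ih
    rw [Finset.sum_insert his]
    filter_upwards [Lp.coeFn_add (F i) (∑ j ∈ s, F j), ih] with x h1 h2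
    rw [h1, Pi.add_apply, h2]
    simp [Finset.sum_insert his]

lemma ereal_coe_ennreal_eq_coe_toReal {v : ℝ≥0∞} (hv : v ≠ ⊤) :
    ((v.toReal : ℝ) : EReal) = (v : EReal) := by
  rw [← EReal.toReal_coe_ennreal (x := v)]
  exact EReal.coe_toReal (by simp [hv]) (by simp)

lemma ennreal_toReal_le_of_ereal_le {v : ℝ≥0∞} {r : ℝ}
    (h : (v : EReal) ≤ (r : EReal)) : v ≠ ⊤ ∧ v.toReal ≤ r := by
  rcases eq_or_ne v ⊤ with rfl | hv
  · rw [EReal.coe_ennreal_top] at h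
    exact absurd (top_le_iff.mp h) (by simp)
  · refine ⟨hv, ?_⟩
    have h1 : ((v.toReal : ℝ) : EReal) ≤ (r : EReal) := by
      rw [ereal_coe_ennreal_eq_coe_toReal hv]; exact h
    exact EReal.coe_le_coe_iff.mp h1

lemma real_le_ennreal_toReal_of_ereal_le {v : ℝ≥0∞} {r : ℝ} (hv : v ≠ ⊤)
    (h : (r : EReal) ≤ (v : EReal)) : r ≤ v.toReal := by
  refine EReal.coe_le_coe_iff.mp ?_
  rw [ereal_coe_ennreal_eq_coe_toReal hv]
  exact h

lemma aux_est {h vb D A c : ℝ} (hpos : 0 < h) (e1 : |D| ≤ vb)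
    (e3 : |D - h * c| ≤ A) (e4 : vb ≤ A + h * |c|) :
    abs (h⁻¹ * vb - |c|) ≤ h⁻¹ * A := by
  have h6 : h * |c| - |D| ≤ |D - h * c| := by
    have h7 := abs_sub_abs_le_abs_sub (h * c) D
    rw [abs_mul, abs_of_pos hpos, abs_sub_comm] at h7
    exact h7
  have key : abs (vb - h * |c|) ≤ A :=
    abs_sub_le_iff.2 ⟨by linarith, by linarith⟩
  have hrw : h⁻¹ * vb - |c| = h⁻¹ * (vb - h * |c|) := by
    field_simp
  rw [hrw, abs_mul, abs_of_pos (inv_pos.2 hpos)]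
  exact mul_le_mul_of_nonneg_left key (inv_nonneg.2 hpos.le)

end Aux

/-- If `γ : [0, T] → L²(X, μ)` is absolutely continuous with Bochner integrable derivative
`γ'`, `γrep t` is a measurable representative of `γ t` for `t ∈ [0, T]`, and
`V a b` is an essential variation of `γrep` over `[a, b]` for all `0 ≤ a ≤ b ≤ T`, then for
a.e. `t ∈ [0, T]`: as `s → t` with `s ≠ t` in `[0, T]`, the functions
`(1/|t - s|) · essVar(γ; min(s,t), max(s,t))` converge to `|γ'(t)|` strongly in `L²(X, μ)`. -/
theorem essVariation_deriv_ae {X : Type*} [MeasurableSpace X] (μ : Measure X)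
    [SigmaFinite μ] (T : ℝ) (hT : 0 < T)
    (γ γ' : ℝ → Lp ℝ 2 μ)
    (hint : IntegrableOn γ' (Set.Icc 0 T))
    (hγ : ∀ t ∈ Set.Icc (0 : ℝ) T, γ t = γ 0 + ∫ τ in (0 : ℝ)..t, γ' τ)
    (γrep : ℝ → X → ℝ)
    (hrep : ∀ t ∈ Set.Icc (0 : ℝ) T, Measurable (γrep t) ∧ γrep t =ᵐ[μ] γ t)
    (V : ℝ → ℝ → X → ENNReal)
    (hV : ∀ a b, 0 ≤ a → a ≤ b → b ≤ T → IsEssVariation μ γrep a b (V a b)) :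
    ∀ᵐ t ∂(volume.restrict (Set.Icc (0 : ℝ) T)),
      Tendsto
        (fun s => eLpNorm
          (fun x => (1 / |t - s|) * (V (min s t) (max s t) x).toReal - |(γ' t : X → ℝ) x|)
          2 μ)
        (nhdsWithin t (Set.Icc (0 : ℝ) T \ {t})) (nhds 0) := by
  classical
  have hQ : MeasurableSet (Set.Icc (0:ℝ) T) := measurableSet_Icc
  have h0Q : (0:ℝ) ∈ Set.Icc (0:ℝ) T := ⟨le_rfl, hT.le⟩
  -- interval integrability of γ' and of lattice-absolute values
  have hγ'int : ∀ c ∈ Set.Icc (0:ℝ) T, ∀ d ∈ Set.Icc (0:ℝ) T,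
      IntervalIntegrable γ' volume c d := by
    intro c hc d hd
    exact (hint.mono_set (Set.uIcc_subset_Icc hc hd)).intervalIntegrable
  have hγ'absint : ∀ (u : Lp ℝ 2 μ), ∀ c ∈ Set.Icc (0:ℝ) T, ∀ d ∈ Set.Icc (0:ℝ) T,
      IntervalIntegrable (fun τ => |γ' τ - u|) volume c d := by
    intro u c hc d hd
    have h1 : IntervalIntegrable (fun τ => γ' τ - u) volume c d :=
      (hγ'int c hc d hd).sub intervalIntegrable_const
    exact ⟨integrable_abs_Lp h1.1, integrable_abs_Lp h1.2⟩
  have habs0 : ∀ c ∈ Set.Icc (0:ℝ) T, ∀ d ∈ Set.Icc (0:ℝ) T,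
      IntervalIntegrable (fun τ => |γ' τ|) volume c d := by
    intro c hc d hd
    have := hγ'absint 0 c hc d hd
    simpa using this
  -- γ d - γ c is the integral of γ'
  have hγdiff : ∀ c ∈ Set.Icc (0:ℝ) T, ∀ d ∈ Set.Icc (0:ℝ) T,
      γ d - γ c = ∫ τ in c..d, γ' τ := by
    intro c hc d hd
    rw [hγ d hd, hγ c hc, add_sub_add_left_eq_sub,
      integral_interval_sub_left (hγ'int 0 h0Q d hd) (hγ'int 0 h0Q c hc)]
  -- finite measure instances on restricted intervals
  have hfinmeas : ∀ c d : ℝ, IsFiniteMeasure (volume.restrict (Set.Ioc c d)) := by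
    intro c d
    exact ⟨by rw [Measure.restrict_apply_univ]; exact measure_Ioc_lt_top⟩
  -- |∫ γ'| ≤ ∫ |γ'| over subintervals, in the Lp lattice order
  have habsle : ∀ c ∈ Set.Icc (0:ℝ) T, ∀ d ∈ Set.Icc (0:ℝ) T, c ≤ d →
      |γ d - γ c| ≤ ∫ τ in c..d, |γ' τ| := by
    intro c hc d hd hcd
    haveI := hfinmeas c d
    rw [hγdiff c hc d hd, intervalIntegral.integral_of_le hcd,
      intervalIntegral.integral_of_le hcd]
    exact abs_integral_le_Lp (hγ'int c hc d hd).1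
  -- the key sandwich for the essential variation
  have hsandwich : ∀ a b, 0 ≤ a → a < b → b ≤ T →
      ∀ᵐ x ∂μ, |γrep b x - γrep a x| ≤ (V a b x).toReal ∧
        (V a b x).toReal ≤ ((∫ τ in a..b, |γ' τ| : Lp ℝ 2 μ) : X → ℝ) x := by
    intro a b ha0 hab hbT
    have haQ : a ∈ Set.Icc (0:ℝ) T := ⟨ha0, hab.le.trans hbT⟩
    have hbQ : b ∈ Set.Icc (0:ℝ) T := ⟨ha0.trans hab.le, hbT⟩
    obtain ⟨hVmeas, hVub, hVmin⟩ := hV a b ha0 hab.le hbT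
    set W : Lp ℝ 2 μ := ∫ τ in a..b, |γ' τ| with hWdef
    have hWm : AEMeasurable (W : X → ℝ) μ := (Lp.aestronglyMeasurable W).aemeasurable
    have hWr_meas : Measurable (hWm.mk _) := hWm.measurable_mk
    have hWr_eq : (W : X → ℝ) =ᵐ[μ] hWm.mk _ := hWm.ae_eq_mk
    -- upper bound: V ≤ W a.e.
    have hub : ∀ᵐ x ∂μ, (V a b x : EReal) ≤ ((hWm.mk _ x : ℝ) : EReal) := by
      refine hVmin _ (measurable_coe_real_ereal.comp hWr_meas) ?_
      rintro ⟨⟨n, σ⟩, hσ0, hσn, hσmono⟩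
      dsimp only at hσ0 hσn hσmono ⊢
      have hσmem : ∀ i, i ≤ n → σ i ∈ Set.Icc a b := by
        intro i hi
        constructor
        · rw [← hσ0]
          exact hσmono.monotoneOn (Set.mem_Iic.2 (Nat.zero_le n)) (Set.mem_Iic.2 hi)
            (Nat.zero_le i)
        · rw [← hσn]
          exact hσmono.monotoneOn (Set.mem_Iic.2 hi) (Set.mem_Iic.2 le_rfl) hi
      have hσQ : ∀ i, i ≤ n → σ i ∈ Set.Icc (0:ℝ) T := fun i hi =>
        Set.Icc_subset_Icc ha0 hbT (hσmem i hi)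
      -- Lp-level bound on the sum
      have hsum : (∑ i ∈ Finset.range n, |γ (σ (i+1)) - γ (σ i)|) ≤ W := by
        have h1 : (∑ i ∈ Finset.range n, |γ (σ (i+1)) - γ (σ i)|) ≤
            ∑ i ∈ Finset.range n, ∫ τ in σ i..σ (i+1), |γ' τ| := by
          refine Finset.sum_le_sum fun i hi => ?_
          have hi' := Finset.mem_range.1 hi
          exact habsle (σ i) (hσQ i hi'.le) (σ (i+1)) (hσQ (i+1) hi')
            (hσmono (Set.mem_Iic.2 hi'.le) (Set.mem_Iic.2 hi') (Nat.lt_succ_self i)).le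
        rw [sum_integral_adjacent_intervals (fun k hk =>
          habs0 (σ k) (hσQ k hk.le) (σ (k+1)) (hσQ (k+1) hk))] at h1
        rwa [hσ0, hσn] at h1
      have hae := (Lp.coeFn_le _ W).mpr hsum
      have hterm : ∀ i, i < n → ∀ᵐ x ∂μ, ((|γ (σ (i+1)) - γ (σ i)| : Lp ℝ 2 μ) : X → ℝ) x
          = |γrep (σ (i+1)) x - γrep (σ i) x| := by
        intro i hi
        filter_upwards [Lp.coeFn_abs (γ (σ (i+1)) - γ (σ i)),
          Lp.coeFn_sub (γ (σ (i+1))) (γ (σ i)),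
          (hrep (σ (i+1)) (hσQ (i+1) hi)).2, (hrep (σ i) (hσQ i hi.le)).2] with x h1 h2 h3 h4
        rw [h1, h2, Pi.sub_apply, h3, h4]
      have hterm' : ∀ᵐ x ∂μ, ∀ i, i < n →
          ((|γ (σ (i+1)) - γ (σ i)| : Lp ℝ 2 μ) : X → ℝ) x
            = |γrep (σ (i+1)) x - γrep (σ i) x| := by
        refine ae_all_iff.2 fun i => ?_
        by_cases hi : i < n
        · filter_upwards [hterm i hi] with x hx
          exact fun _ => hx
        · exact Eventually.of_forall fun x hx => absurd hx hi
      filter_upwards [hae, Lp.coeFn_sum' (Finset.range n)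
        (fun i => |γ (σ (i+1)) - γ (σ i)|), hterm', hWr_eq] with x h1 h2 h3 h4
      refine EReal.coe_le_coe_iff.mpr ?_
      calc (∑ i ∈ Finset.range n, |γrep (σ (i+1)) x - γrep (σ i) x|)
          = ∑ i ∈ Finset.range n, ((|γ (σ (i+1)) - γ (σ i)| : Lp ℝ 2 μ) : X → ℝ) x :=
            (Finset.sum_congr rfl fun i hi => (h3 i (Finset.mem_range.1 hi)).symm)
        _ = (∑ i ∈ Finset.range n, |γ (σ (i+1)) - γ (σ i)| : Lp ℝ 2 μ) x := h2.symm
        _ ≤ (W : X → ℝ) x := h1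
        _ = hWm.mk _ x := h4
    -- lower bound: |γrep b - γrep a| ≤ V a.e.
    have hlb : ∀ᵐ x ∂μ, ((|γrep b x - γrep a x| : ℝ) : EReal) ≤ (V a b x : EReal) := by
      have hm : StrictMonoOn (fun i : ℕ => if i = 0 then a else b) (Set.Iic 1) := by
        intro i hi j hj hij
        have hi0 : i = 0 := Nat.lt_one_iff.mp (lt_of_lt_of_le hij (Set.mem_Iic.1 hj))
        have hj0 : j ≠ 0 := by omega
        simp only [hi0, if_pos rfl, if_neg hj0]
        exact hab
      have h := hVub ⟨(1, fun i => if i = 0 then a else b), by norm_num, by norm_num, hm⟩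
      filter_upwards [h] with x hx
      simpa using hx
    filter_upwards [hub, hlb, hWr_eq] with x h1 h2 h3
    obtain ⟨hne, hle2⟩ := ennreal_toReal_le_of_ereal_le h1
    refine ⟨real_le_ennreal_toReal_of_ereal_le hne h2, ?_⟩
    rw [h3]
    exact hle2
  -- the Lebesgue differentiation part
  set f : ℝ → Lp ℝ 2 μ := (Set.Icc (0:ℝ) T).indicator γ' with hfdef
  have hf_int : Integrable f volume := (integrable_indicator_iff hQ).2 hint
  have hleb := IsUnifLocDoublingMeasure.ae_tendsto_average_norm_sub (μ := volume)
    hf_int.locallyIntegrable 1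
  filter_upwards [ae_restrict_of_ae hleb, ae_restrict_mem hQ] with t hlebt htQ
  set l := nhdsWithin t (Set.Icc (0:ℝ) T \ {t}) with hldef
  have hδ : Tendsto (fun s => |t - s|) l (nhdsWithin 0 (Set.Ioi 0)) := by
    rw [tendsto_nhdsWithin_iff]
    constructor
    · have h1 : Tendsto (fun s : ℝ => |t - s|) (nhds t) (nhds |t - t|) :=
        ((continuous_const.sub continuous_id).abs).tendsto t
      simpa using h1.mono_left nhdsWithin_le_nhds
    · filter_upwards [self_mem_nhdsWithin] with s hs
      exact Set.mem_Ioi.2 (abs_pos.2 (sub_ne_zero.2 fun h => hs.2 (by simp [h.symm])))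
  have hG := hlebt (fun _ : ℝ => t) (fun s => |t - s|) hδ
    (Eventually.of_forall fun s => Metric.mem_closedBall_self (by positivity))
  -- the eventual bound
  have hbound : ∀ᶠ s in l, eLpNorm
      (fun x => (1 / |t - s|) * (V (min s t) (max s t) x).toReal - |(γ' t : X → ℝ) x|) 2 μ
      ≤ ENNReal.ofReal (2 * ⨍ y in Metric.closedBall t |t - s|, ‖f y - f t‖) := by
    filter_upwards [self_mem_nhdsWithin] with s hs
    have hsQ : s ∈ Set.Icc (0:ℝ) T := hs.1
    have hst : s ≠ t := fun h => hs.2 (by simp [h])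
    have hab : min s t < max s t := min_lt_max.2 hst
    have ha0 : 0 ≤ min s t := le_min hsQ.1 htQ.1
    have hbT : max s t ≤ T := max_le hsQ.2 htQ.2
    have haQ : min s t ∈ Set.Icc (0:ℝ) T := ⟨ha0, hab.le.trans hbT⟩
    have hbQ : max s t ∈ Set.Icc (0:ℝ) T := ⟨ha0.trans hab.le, hbT⟩
    have hpos : (0:ℝ) < |t - s| := abs_pos.2 (sub_ne_zero.2 (Ne.symm hst))
    have hh : max s t - min s t = |t - s| := by
      rw [max_sub_min_eq_abs, abs_sub_comm]
    have hba : (0:ℝ) < max s t - min s t := sub_pos.2 hab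
    haveI := hfinmeas (min s t) (max s t)
    -- integrability on the restricted measure
    have hγ'i : Integrable γ' (volume.restrict (Set.Ioc (min s t) (max s t))) :=
      (hγ'int (min s t) haQ (max s t) hbQ).1
    have hsubi : Integrable (fun τ => γ' τ - γ' t)
        (volume.restrict (Set.Ioc (min s t) (max s t))) := hγ'i.sub (integrable_const _)
    have hAi : Integrable (fun τ => |γ' τ - γ' t|)
        (volume.restrict (Set.Ioc (min s t) (max s t))) := integrable_abs_Lp hsubi
    have habsi : Integrable (fun τ => |γ' τ|)
        (volume.restrict (Set.Ioc (min s t) (max s t))) := integrable_abs_Lp hγ'i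
    -- the three Lp-order facts
    have hF1 : |(γ (max s t) - γ (min s t)) - ((max s t - min s t) • γ' t)|
        ≤ (∫ τ in (min s t)..(max s t), |γ' τ - γ' t| : Lp ℝ 2 μ) := by
      have hDeq : (γ (max s t) - γ (min s t)) - (max s t - min s t) • γ' t
          = ∫ τ in (min s t)..(max s t), (γ' τ - γ' t) := by
        rw [hγdiff (min s t) haQ (max s t) hbQ,
          intervalIntegral.integral_sub (hγ'int (min s t) haQ (max s t) hbQ)
            intervalIntegrable_const, intervalIntegral.integral_const]
      rw [hDeq, intervalIntegral.integral_of_le hab.le,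
        intervalIntegral.integral_of_le hab.le]
      exact abs_integral_le_Lp hsubi
    have hF2 : (∫ τ in (min s t)..(max s t), |γ' τ| : Lp ℝ 2 μ)
        ≤ (∫ τ in (min s t)..(max s t), |γ' τ - γ' t| : Lp ℝ 2 μ)
          + (max s t - min s t) • |γ' t| := by
      have hRHS : (∫ τ in Set.Ioc (min s t) (max s t), (|γ' τ - γ' t| + |γ' t|) ∂volume)
          = (∫ τ in (min s t)..(max s t), |γ' τ - γ' t| : Lp ℝ 2 μ)
            + (max s t - min s t) • |γ' t| := by
        rw [integral_add hAi (integrable_const _), setIntegral_const,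
          intervalIntegral.integral_of_le hab.le, Real.volume_real_Ioc_of_le hab.le]
      calc (∫ τ in (min s t)..(max s t), |γ' τ| : Lp ℝ 2 μ)
          = ∫ τ in Set.Ioc (min s t) (max s t), |γ' τ| ∂volume :=
            intervalIntegral.integral_of_le hab.le
        _ ≤ ∫ τ in Set.Ioc (min s t) (max s t), (|γ' τ - γ' t| + |γ' t|) ∂volume := by
            refine integral_mono_Lp habsi (hAi.add (integrable_const _)) fun τ => ?_
            have htri := abs_add_le (γ' τ - γ' t) (γ' t)
            have heq : γ' τ - γ' t + γ' t = γ' τ := by abel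
            rwa [heq] at htri
        _ = _ := hRHS
    have hF3 : (0 : Lp ℝ 2 μ) ≤ ∫ τ in (min s t)..(max s t), |γ' τ - γ' t| := by
      rw [intervalIntegral.integral_of_le hab.le]
      exact integral_nonneg_Lp fun τ => abs_nonneg _
    have hsand := hsandwich (min s t) (max s t) ha0 hab hbT
    -- pointwise inequality
    have hkey : ∀ᵐ x ∂μ,
        abs ((1 / |t - s|) * (V (min s t) (max s t) x).toReal - |(γ' t : X → ℝ) x|)
          ≤ (max s t - min s t)⁻¹
            * ((∫ τ in (min s t)..(max s t), |γ' τ - γ' t| : Lp ℝ 2 μ) : X → ℝ) x ∧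
        0 ≤ ((∫ τ in (min s t)..(max s t), |γ' τ - γ' t| : Lp ℝ 2 μ) : X → ℝ) x := by
      filter_upwards [hsand, (Lp.coeFn_le _ _).mpr hF1, (Lp.coeFn_le _ _).mpr hF2,
        (Lp.coeFn_nonneg _).mpr hF3,
        Lp.coeFn_abs ((γ (max s t) - γ (min s t)) - (max s t - min s t) • γ' t),
        Lp.coeFn_sub (γ (max s t) - γ (min s t)) ((max s t - min s t) • γ' t),
        Lp.coeFn_smul (max s t - min s t) (γ' t),
        Lp.coeFn_add (∫ τ in (min s t)..(max s t), |γ' τ - γ' t| : Lp ℝ 2 μ)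
          ((max s t - min s t) • |γ' t|),
        Lp.coeFn_smul (max s t - min s t) |γ' t|, Lp.coeFn_abs (γ' t),
        Lp.coeFn_sub (γ (max s t)) (γ (min s t)),
        (hrep (max s t) hbQ).2, (hrep (min s t) haQ).2]
        with x hsx h1 h2 h3 h4 h5 h6 h7 h8 h9 h10 h11 h12
      refine ⟨?_, h3⟩
      -- translate everything to plain real facts
      have e1 : |(γ (max s t) : X → ℝ) x - (γ (min s t) : X → ℝ) x|
          ≤ (V (min s t) (max s t) x).toReal := by
        have h := hsx.1
        rwa [h11, h12] at h
      have e3 : |((γ (max s t) : X → ℝ) x - (γ (min s t) : X → ℝ) x)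
          - (max s t - min s t) * (γ' t : X → ℝ) x|
          ≤ ((∫ τ in (min s t)..(max s t), |γ' τ - γ' t| : Lp ℝ 2 μ) : X → ℝ) x := by
        have h := h1
        rw [h4, h5] at h
        simp only [Pi.sub_apply] at h
        rw [h10] at h
        simp only [Pi.sub_apply] at h
        rw [h6] at h
        simp only [Pi.smul_apply, smul_eq_mul] at h
        exact h
      have e2 : (V (min s t) (max s t) x).toReal
          ≤ ((∫ τ in (min s t)..(max s t), |γ' τ - γ' t| : Lp ℝ 2 μ) : X → ℝ) x
            + (max s t - min s t) * |(γ' t : X → ℝ) x| := by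
        have h := h2
        rw [h7] at h
        simp only [Pi.add_apply] at h
        rw [h8] at h
        simp only [Pi.smul_apply, smul_eq_mul] at h
        rw [h9] at h
        exact hsx.2.trans h
      rw [← hh, one_div]
      exact aux_est hba e1 e3 e2
    -- eLpNorm estimate
    have hB : eLpNorm
        (fun x => (1 / |t - s|) * (V (min s t) (max s t) x).toReal - |(γ' t : X → ℝ) x|) 2 μ
        ≤ eLpNorm (((max s t - min s t)⁻¹
          • (∫ τ in (min s t)..(max s t), |γ' τ - γ' t| : Lp ℝ 2 μ) : Lp ℝ 2 μ) : X → ℝ) 2 μ := by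
      refine eLpNorm_mono_ae ?_
      filter_upwards [hkey, Lp.coeFn_smul ((max s t - min s t)⁻¹)
        (∫ τ in (min s t)..(max s t), |γ' τ - γ' t| : Lp ℝ 2 μ)] with x hx hBx
      rw [Real.norm_eq_abs, Real.norm_eq_abs, hBx, Pi.smul_apply, smul_eq_mul, abs_mul,
        abs_of_nonneg (inv_nonneg.2 hba.le), abs_of_nonneg hx.2]
      exact hx.1
    have hB2 : eLpNorm (((max s t - min s t)⁻¹
        • (∫ τ in (min s t)..(max s t), |γ' τ - γ' t| : Lp ℝ 2 μ) : Lp ℝ 2 μ) : X → ℝ) 2 μ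
        = ENNReal.ofReal ‖((max s t - min s t)⁻¹
          • (∫ τ in (min s t)..(max s t), |γ' τ - γ' t| : Lp ℝ 2 μ) : Lp ℝ 2 μ)‖ := by
      rw [Lp.norm_def, ENNReal.ofReal_toReal (Lp.eLpNorm_ne_top _)]
    have hnorm : ‖((max s t - min s t)⁻¹
        • (∫ τ in (min s t)..(max s t), |γ' τ - γ' t| : Lp ℝ 2 μ) : Lp ℝ 2 μ)‖
        ≤ 2 * ⨍ y in Metric.closedBall t |t - s|, ‖f y - f t‖ := by
      rw [norm_smul, Real.norm_eq_abs, abs_of_nonneg (inv_nonneg.2 hba.le)]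
      have hA1 : ‖(∫ τ in (min s t)..(max s t), |γ' τ - γ' t| : Lp ℝ 2 μ)‖
          ≤ ∫ τ in Set.Ioc (min s t) (max s t), ‖γ' τ - γ' t‖ ∂volume := by
        refine (intervalIntegral.norm_integral_le_integral_norm_uIoc).trans ?_
        rw [Set.uIoc_of_le hab.le]
        simp only [norm_abs_eq_norm]
        exact le_rfl
      have hA2 : ∫ τ in Set.Ioc (min s t) (max s t), ‖γ' τ - γ' t‖ ∂volume
          = ∫ τ in Set.Ioc (min s t) (max s t), ‖f τ - f t‖ ∂volume := by
        refine setIntegral_congr_fun measurableSet_Ioc fun τ hτ => ?_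
        have hτQ : τ ∈ Set.Icc (0:ℝ) T := ⟨ha0.trans hτ.1.le, hτ.2.trans hbT⟩
        rw [hfdef]
        simp only [Set.indicator_of_mem hτQ, Set.indicator_of_mem htQ]
      have hA3 : ∫ τ in Set.Ioc (min s t) (max s t), ‖f τ - f t‖ ∂volume
          ≤ ∫ τ in Metric.closedBall t |t - s|, ‖f τ - f t‖ ∂volume := by
        refine setIntegral_mono_set ((hf_int.integrableOn.sub
          (integrableOn_const measure_closedBall_lt_top.ne)).norm) ?_ ?_
        · exact Eventually.of_forall fun τ => norm_nonneg _
        · refine HasSubset.Subset.eventuallyLE fun τ hτ => ?_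
          rw [Metric.mem_closedBall, Real.dist_eq, ← hh]
          have ht1 : min s t ≤ t := min_le_right s t
          have ht2 : t ≤ max s t := le_max_right s t
          rw [abs_le]
          constructor <;> linarith [hτ.1.le, hτ.2]
      have hA4 : ∫ τ in Metric.closedBall t |t - s|, ‖f τ - f t‖ ∂volume
          = (2 * |t - s|) * ⨍ y in Metric.closedBall t |t - s|, ‖f y - f t‖ := by
        have h2pos : (0:ℝ) < 2 * |t - s| := by linarith
        rw [setAverage_eq, Real.volume_real_closedBall (by linarith),
          smul_eq_mul, ← mul_assoc, mul_inv_cancel₀ h2pos.ne', one_mul]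
      have havg_nonneg : 0 ≤ ⨍ y in Metric.closedBall t |t - s|, ‖f y - f t‖ := by
        rw [setAverage_eq, smul_eq_mul]
        refine mul_nonneg (by positivity) (integral_nonneg fun y => norm_nonneg _)
      calc (max s t - min s t)⁻¹ * ‖(∫ τ in (min s t)..(max s t), |γ' τ - γ' t| : Lp ℝ 2 μ)‖
          ≤ (max s t - min s t)⁻¹
            * ((2 * |t - s|) * ⨍ y in Metric.closedBall t |t - s|, ‖f y - f t‖) := by
            refine mul_le_mul_of_nonneg_left ?_ (inv_nonneg.2 hba.le)
            rw [← hA4]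
            exact hA1.trans (hA2.le.trans hA3)
        _ = 2 * ⨍ y in Metric.closedBall t |t - s|, ‖f y - f t‖ := by
            rw [← hh]
            field_simp
    calc eLpNorm (fun x => (1 / |t - s|) * (V (min s t) (max s t) x).toReal
          - |(γ' t : X → ℝ) x|) 2 μ
        ≤ _ := hB
      _ = _ := hB2
      _ ≤ ENNReal.ofReal (2 * ⨍ y in Metric.closedBall t |t - s|, ‖f y - f t‖) :=
          ENNReal.ofReal_le_ofReal hnorm
  -- squeeze
  have hup : Tendsto (fun s => ENNReal.ofReal
      (2 * ⨍ y in Metric.closedBall t |t - s|, ‖f y - f t‖)) l (nhds 0) := by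
    have h2 : Tendsto (fun s => 2 * ⨍ y in Metric.closedBall t |t - s|, ‖f y - f t‖)
        l (nhds 0) := by
      simpa using hG.const_mul (2:ℝ)
    have h3 := (ENNReal.continuous_ofReal.tendsto 0).comp h2
    rw [ENNReal.ofReal_zero] at h3
    exact h3
  exact tendsto_of_tendsto_of_tendsto_of_le_of_le' tendsto_const_nhds hup
    (Eventually.of_forall fun _ => zero_le) hbound
end

section
/- Let K be a metric space equipped with a finite Borel measure μ, let Ξ be a compact metric space, and let ν_j, ν (j ∈ ℕ) be finite Borel measures on K × Ξ whose first marginal (pushforward under the projection (x, ξ) ↦ x) equals μ. Assume ν_j → ν narrowly, i.e. ∫ f dν_j → ∫ f dν for every bounded continuous f : K × Ξ → ℝ. Then ∫ f dν_j → ∫ f dν also holds for every Carathéodory integrand f, i.e. every Borel function f : K × Ξ → ℝ such that f(x, ·) is continuous on Ξ for μ-a.e. x ∈ K and the function x ↦ sup_{ξ∈Ξ} |f(x, ξ)| belongs to L¹(K, μ). -/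
set_option synthInstance.maxHeartbeats 1000000
set_option maxHeartbeats 1000000


open MeasureTheory Filter
open scoped BoundedContinuousFunction

section Aux

/-- measurability from measurability of distances to points, in a separable metric space -/
theorem aux_measurable_of_dist {α β : Type*} [MeasurableSpace α] [MetricSpace β]
    [TopologicalSpace.SeparableSpace β] [MeasurableSpace β] [BorelSpace β]
    {u : α → β} (h : ∀ y : β, Measurable fun x => dist (u x) y) : Measurable u := by
  apply measurable_of_isClosed
  intro C hC
  obtain ⟨c, hcC, hcc, hCc⟩ :=
    (TopologicalSpace.IsSeparable.of_separableSpace C).exists_countable_dense_subset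
  have hedist : ∀ x, EMetric.infEdist (u x) C = ⨅ d : c, edist (u x) (d : β) := by
    intro x
    have h1 : EMetric.infEdist (u x) C = EMetric.infEdist (u x) c := by
      refine le_antisymm (EMetric.infEdist_anti hcC) ?_
      unfold EMetric.infEdist
      rw [← EMetric.infEdist_closure (s := c)]
      exact EMetric.infEdist_anti hCc
    rw [h1, EMetric.infEdist, Metric.infEDist, iInf_subtype]
  have hm : Measurable fun x => EMetric.infEdist (u x) C := by
    simp_rw [hedist]
    haveI := hcc.to_subtype
    refine Measurable.iInf fun d => ?_
    simp_rw [edist_dist]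
    exact ENNReal.measurable_ofReal.comp (h d)
  have hpre : u ⁻¹' C = {x | EMetric.infEdist (u x) C = 0} := by
    ext x
    exact EMetric.mem_iff_infEdist_zero_of_closed hC
  rw [hpre]
  exact hm (measurableSet_singleton 0)

/-- sup norm over a dense subset -/
theorem aux_norm_eq {Ξ : Type*} [MetricSpace Ξ] [CompactSpace Ξ] {D : Set Ξ}
    (hD : Dense D) (hne : D.Nonempty) (v : C(Ξ, ℝ)) : ‖v‖ = ⨆ d : D, |v (d : Ξ)| := by
  haveI := hne.to_subtype
  have hbdd : BddAbove (Set.range fun d : D => |v (d : Ξ)|) := by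
    refine ⟨‖v‖, ?_⟩
    rintro _ ⟨d, rfl⟩
    simpa [Real.norm_eq_abs] using v.norm_coe_le_norm (d : Ξ)
  refine le_antisymm ?_ (ciSup_le fun d => by
    simpa [Real.norm_eq_abs] using v.norm_coe_le_norm (d : Ξ))
  have hc0 : 0 ≤ ⨆ d : D, |v (d : Ξ)| := Real.iSup_nonneg fun d => abs_nonneg _
  rw [ContinuousMap.norm_le _ hc0]
  intro ξ
  have hclosed : IsClosed {y : Ξ | |v y| ≤ ⨆ d : D, |v (d : Ξ)|} :=
    isClosed_le (continuous_abs.comp v.continuous) continuous_const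
  have hsub : D ⊆ {y : Ξ | |v y| ≤ ⨆ d : D, |v (d : Ξ)|} := fun y hy =>
    le_ciSup hbdd (⟨y, hy⟩ : D)
  have : (Set.univ : Set Ξ) ⊆ {y : Ξ | |v y| ≤ ⨆ d : D, |v (d : Ξ)|} := by
    rw [← hD.closure_eq]
    exact closure_minimal hsub hclosed
  simpa [Real.norm_eq_abs] using this (Set.mem_univ ξ)

variable {K Ξ : Type*} [MeasurableSpace K]
    [MetricSpace Ξ] [CompactSpace Ξ] [MeasurableSpace Ξ] [BorelSpace Ξ]

/-- transfer a.e. equality through the first marginal -/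
theorem aux_ae {μ : Measure K} {ρ : Measure (K × Ξ)} (hm : ρ.map Prod.fst = μ)
    {β : Type*} {w w' : K → β} (hww' : ∀ᵐ x ∂μ, w x = w' x) :
    ∀ᵐ p ∂ρ, w p.1 = w' p.1 := by
  obtain ⟨t, hsub, htm, ht0⟩ := exists_measurable_superset_of_null (ae_iff.1 hww')
  have hρt : ρ (Prod.fst ⁻¹' t) = 0 := by
    rw [← Measure.map_apply measurable_fst htm, hm]
    exact ht0
  refine ae_iff.2 (measure_mono_null ?_ hρt)
  intro p hp
  exact Set.mem_preimage.2 (hsub hp)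

theorem aux_key [Nonempty Ξ] {μ : Measure K} {ρ : Measure (K × Ξ)}
    (hm : ρ.map Prod.fst = μ)
    {w : K → C(Ξ, ℝ)} (hw : Integrable w μ) :
    Integrable (fun p : K × Ξ => w p.1 p.2) ρ := by
  haveI : SecondCountableTopology Ξ := inferInstance
  -- strong measurability
  obtain ⟨w', hw'sm, hww'⟩ := hw.1
  have hF'sm : StronglyMeasurable fun p : K × Ξ => w' p.1 p.2 := by
    have h1 : StronglyMeasurable fun p : K × Ξ => w' p.1 :=
      hw'sm.comp_measurable measurable_fst
    have h2 : StronglyMeasurable fun p : K × Ξ => ((w' p.1, p.2) : C(Ξ, ℝ) × Ξ) :=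
      h1.prodMk measurable_snd.stronglyMeasurable
    exact (continuous_eval).comp_stronglyMeasurable h2
  have hae : ∀ᵐ p ∂ρ, w p.1 p.2 = w' p.1 p.2 := by
    filter_upwards [aux_ae hm hww'] with p hp
    rw [hp]
  have hFsm : AEStronglyMeasurable (fun p : K × Ξ => w p.1 p.2) ρ :=
    ⟨fun p => w' p.1 p.2, hF'sm, hae⟩
  -- bound
  have hGρ : Integrable (fun p : K × Ξ => ‖w p.1‖) ρ := by
    have h1 : Integrable (fun x => ‖w x‖) (ρ.map Prod.fst) := hm ▸ hw.norm
    exact (integrable_map_measure h1.1 measurable_fst.aemeasurable).mp h1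
  refine hGρ.mono' hFsm (Eventually.of_forall fun p => ?_)
  simpa [Real.norm_eq_abs] using (w p.1).norm_coe_le_norm p.2

theorem aux_diff_bound [Nonempty Ξ] {μ : Measure K} {ρ : Measure (K × Ξ)}
    (hm : ρ.map Prod.fst = μ)
    {h₁ h₂ : K × Ξ → ℝ} (hi₁ : Integrable h₁ ρ) (hi₂ : Integrable h₂ ρ)
    {G : K → ℝ} (hG : Integrable G μ)
    (hb : ∀ p : K × Ξ, |h₁ p - h₂ p| ≤ G p.1) :
    |∫ p, h₁ p ∂ρ - ∫ p, h₂ p ∂ρ| ≤ ∫ x, G x ∂μ := by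
  have hGρ : Integrable (fun p : K × Ξ => G p.1) ρ := by
    have h1 : Integrable G (ρ.map Prod.fst) := hm ▸ hG
    exact (integrable_map_measure h1.1 measurable_fst.aemeasurable).mp h1
  rw [← integral_sub hi₁ hi₂]
  calc |∫ p, (h₁ p - h₂ p) ∂ρ| ≤ ∫ p, |h₁ p - h₂ p| ∂ρ := by
        simpa [Real.norm_eq_abs] using norm_integral_le_integral_norm fun p => h₁ p - h₂ p
    _ ≤ ∫ p, G p.1 ∂ρ := integral_mono (hi₁.sub hi₂).abs hGρ hb
    _ = ∫ x, G x ∂μ := by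
        have h1 : Integrable G (ρ.map Prod.fst) := hm ▸ hG
        rw [← hm]
        exact (integral_map measurable_fst.aemeasurable h1.1).symm

theorem aux_squeeze {A : ℕ → ℝ} {a : ℝ}
    (h : ∀ ε : ℝ, 0 < ε → ∃ (B : ℕ → ℝ) (b : ℝ), Tendsto B atTop (nhds b) ∧
      (∀ j, |A j - B j| ≤ ε) ∧ |a - b| ≤ ε) :
    Tendsto A atTop (nhds a) := by
  rw [Metric.tendsto_atTop]
  intro ε hε
  obtain ⟨B, b, hB, hAB, hab⟩ := h (ε / 4) (by linarith)
  obtain ⟨N, hN⟩ := Metric.tendsto_atTop.1 hB (ε / 4) (by linarith)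
  refine ⟨N, fun n hn => ?_⟩
  have h1 := hN n hn
  rw [Real.dist_eq] at h1 ⊢
  have h2 := hAB n
  calc |A n - a| ≤ |A n - B n| + |B n - a| := abs_sub_le _ _ _
    _ ≤ |A n - B n| + (|B n - b| + |b - a|) := by
        have := abs_sub_le (B n) b a
        linarith
    _ < ε := by
        rw [abs_sub_comm b a] at *
        linarith

end Aux

/-- If Young measures `ν_j` on `K × Ξ` (finite Borel measures with first marginal `μ`,
`Ξ` a compact metric space) converge narrowly to `ν`, then `∫ f dν_j → ∫ f dν` also holds
for every Carathéodory integrand `f`, i.e. every Borel `f : K × Ξ → ℝ` such that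
`f(x, ·)` is continuous for `μ`-a.e. `x` and `x ↦ sup_ξ |f(x, ξ)|` belongs to `L¹(μ)`. -/
theorem narrow_convergence_caratheodory
    {K Ξ : Type*} [MetricSpace K] [MeasurableSpace K] [BorelSpace K]
    [MetricSpace Ξ] [CompactSpace Ξ] [MeasurableSpace Ξ] [BorelSpace Ξ]
    (μ : Measure K) [IsFiniteMeasure μ]
    (ν : ℕ → Measure (K × Ξ)) (νlim : Measure (K × Ξ))
    [∀ j, IsFiniteMeasure (ν j)] [IsFiniteMeasure νlim]
    (hmarg : ∀ j, (ν j).map Prod.fst = μ) (hmarglim : νlim.map Prod.fst = μ)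
    (hnarrow : ∀ f : K × Ξ →ᵇ ℝ,
      Tendsto (fun j => ∫ p, f p ∂(ν j)) atTop (nhds (∫ p, f p ∂νlim)))
    (f : K × Ξ → ℝ) (hf : Measurable f)
    (hcont : ∀ᵐ x ∂μ, Continuous fun ξ => f (x, ξ))
    (hint : Integrable (fun x => ⨆ ξ, |f (x, ξ)|) μ) :
    Tendsto (fun j => ∫ p, f p ∂(ν j)) atTop (nhds (∫ p, f p ∂νlim)) := by
  classical
  rcases isEmpty_or_nonempty Ξ with hΞ | hΞ
  · haveI : IsEmpty (K × Ξ) := inferInstance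
    simp only [integral_of_isEmpty]
    exact tendsto_const_nhds
  -- the bad set
  obtain ⟨N, hNbad, hNm, hNnull⟩ :=
    exists_measurable_superset_of_null (ae_iff.1 hcont)
  have hcont' : ∀ x ∉ N, Continuous fun ξ => f (x, ξ) := by
    intro x hx
    by_contra hc
    exact hx (hNbad hc)
  -- the C(Ξ,ℝ)-valued function
  set u : K → C(Ξ, ℝ) := fun x =>
    if h : x ∈ N then 0 else ⟨fun ξ => f (x, ξ), hcont' x h⟩ with hu_def
  have hu_apply : ∀ (x : K) (ξ : Ξ), u x ξ = if x ∈ N then 0 else f (x, ξ) := by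
    intro x ξ
    by_cases hx : x ∈ N <;> simp [hu_def, hx]
  have hu_eq : ∀ x ∉ N, ∀ ξ, u x ξ = f (x, ξ) := by
    intro x hx ξ
    rw [hu_apply]
    simp [hx]
  -- measurability of u
  haveI : SecondCountableTopology Ξ := inferInstance
  letI : MeasurableSpace C(Ξ, ℝ) := borel _
  haveI : BorelSpace C(Ξ, ℝ) := ⟨rfl⟩
  obtain ⟨D, hDc, hDd⟩ := TopologicalSpace.exists_countable_dense Ξ
  have hDne : D.Nonempty := hDd.nonempty
  haveI := hDc.to_subtype
  haveI := hDne.to_subtype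
  have humeas : Measurable u := by
    apply aux_measurable_of_dist
    intro g
    have hrw : ∀ x, dist (u x) g = ⨆ d : D, |u x (d : Ξ) - g (d : Ξ)| := by
      intro x
      rw [dist_eq_norm, aux_norm_eq hDd hDne]
      simp
    simp_rw [hrw]
    refine Measurable.iSup fun d => Measurable.abs (Measurable.sub ?_ measurable_const)
    have : (fun x => u x (d : Ξ)) = fun x => if x ∈ N then 0 else f (x, (d : Ξ)) :=
      funext fun x => hu_apply x d
    rw [this]
    exact Measurable.ite hNm measurable_const (hf.comp measurable_prodMk_right)
  have husm : StronglyMeasurable u := humeas.stronglyMeasurable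
  -- integrability of u
  have hu_norm : ∀ x, ‖u x‖ ≤ ⨆ ξ, |f (x, ξ)| := by
    intro x
    by_cases hx : x ∈ N
    · have : u x = 0 := by simp [hu_def, hx]
      rw [this, norm_zero]
      exact Real.iSup_nonneg fun ξ => abs_nonneg _
    · have hbdd : BddAbove (Set.range fun ξ => |f (x, ξ)|) := by
        refine ⟨‖u x‖, ?_⟩
        rintro _ ⟨ξ, rfl⟩
        have hle := (u x).norm_coe_le_norm ξ
        rw [hu_eq x hx ξ, Real.norm_eq_abs] at hle
        exact hle
      have h0 : 0 ≤ ⨆ ξ, |f (x, ξ)| := Real.iSup_nonneg fun ξ => abs_nonneg _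
      rw [ContinuousMap.norm_le _ h0]
      intro ξ
      rw [hu_eq x hx ξ, Real.norm_eq_abs]
      exact le_ciSup hbdd ξ
  have huint : Integrable u μ :=
    hint.mono' husm.aestronglyMeasurable (Eventually.of_forall hu_norm)
  -- reduce goal to u
  have hcongr : ∀ (ρ : Measure (K × Ξ)), ρ.map Prod.fst = μ →
      ∫ p, f p ∂ρ = ∫ p, u p.1 p.2 ∂ρ := by
    intro ρ hm
    refine integral_congr_ae ?_
    have hρN : ρ (Prod.fst ⁻¹' N) = 0 := by
      rw [← Measure.map_apply measurable_fst hNm, hm]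
      exact hNnull
    have hae : ∀ᵐ p ∂ρ, p.1 ∉ N := by
      refine ae_iff.2 ?_
      simp only [not_not]
      exact hρN
    filter_upwards [hae] with p hp
    exact (hu_eq p.1 hp p.2).symm
  rw [hcongr νlim hmarglim]
  have hcongr' : (fun j => ∫ p, f p ∂(ν j)) = fun j => ∫ p, u p.1 p.2 ∂(ν j) :=
    funext fun j => hcongr (ν j) (hmarg j)
  rw [hcongr']
  -- now prove the statement for all integrable w by induction
  have main : ∀ ⦃w : K → C(Ξ, ℝ)⦄, Integrable w μ →
      Tendsto (fun j => ∫ p, w p.1 p.2 ∂(ν j)) atTop (nhds (∫ p, w p.1 p.2 ∂νlim)) := by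
    refine Integrable.induction (P := fun w : K → C(Ξ, ℝ) =>
      Tendsto (fun j => ∫ p, w p.1 p.2 ∂(ν j)) atTop (nhds (∫ p, w p.1 p.2 ∂νlim)))
      ?_ ?_ ?_ ?_
    · -- indicator case
      intro g s hs hμs
      apply aux_squeeze
      intro ε hε
      set M : ℝ := ‖g‖ + 1 with hM
      have hM0 : 0 < M := by positivity
      have hind : Integrable (s.indicator fun _ => (1 : ℝ)) μ :=
        (integrable_const (1 : ℝ)).indicator hs
      obtain ⟨φ, hφ, hφint⟩ :=
        hind.exists_boundedContinuous_integral_sub_le (div_pos hε hM0)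
      set b : K × Ξ →ᵇ ℝ :=
        (φ.compContinuous ⟨Prod.fst, continuous_fst⟩) *
          ((BoundedContinuousFunction.mkOfCompact g).compContinuous ⟨Prod.snd, continuous_snd⟩)
        with hb_def
      have hb_apply : ∀ p : K × Ξ, b p = φ p.1 * g p.2 := fun p => rfl
      have hG : Integrable (fun x => |s.indicator (fun _ => (1:ℝ)) x - φ x| * ‖g‖) μ :=
        ((hind.sub hφint).abs.mul_const _)
      have hGle : ∫ x, |s.indicator (fun _ => (1:ℝ)) x - φ x| * ‖g‖ ∂μ ≤ ε := by
        rw [integral_mul_const]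
        calc (∫ x, |s.indicator (fun _ => (1:ℝ)) x - φ x| ∂μ) * ‖g‖
            ≤ (ε / M) * ‖g‖ := by
              refine mul_le_mul_of_nonneg_right ?_ (norm_nonneg g)
              simpa [Real.norm_eq_abs] using hφ
          _ ≤ (ε / M) * M := by
              refine mul_le_mul_of_nonneg_left ?_ (le_of_lt (div_pos hε hM0))
              simp [hM]
          _ = ε := div_mul_cancel₀ ε (ne_of_gt hM0)
      have hw_int : Integrable ((s.indicator fun _ => g) : K → C(Ξ, ℝ)) μ :=
        (integrable_const g).indicator hs
      have hptwise : ∀ p : K × Ξ,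
          |(s.indicator (fun _ => g) : K → C(Ξ,ℝ)) p.1 p.2 - b p| ≤
            |s.indicator (fun _ => (1:ℝ)) p.1 - φ p.1| * ‖g‖ := by
        intro p
        rw [hb_apply]
        by_cases hp : p.1 ∈ s
        · simp only [Set.indicator_of_mem hp]
          rw [show g p.2 - φ p.1 * g p.2 = (1 - φ p.1) * g p.2 by ring, abs_mul]
          exact mul_le_mul_of_nonneg_left
            (by simpa [Real.norm_eq_abs] using g.norm_coe_le_norm p.2) (abs_nonneg _)
        · simp only [Set.indicator_of_notMem hp, ContinuousMap.zero_apply]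
          rw [show (0:ℝ) - φ p.1 * g p.2 = (0 - φ p.1) * g p.2 by ring, abs_mul]
          exact mul_le_mul_of_nonneg_left
            (by simpa [Real.norm_eq_abs] using g.norm_coe_le_norm p.2) (abs_nonneg _)
      refine ⟨fun j => ∫ p, b p ∂(ν j), ∫ p, b p ∂νlim, hnarrow b, ?_, ?_⟩
      · intro j
        exact le_trans (aux_diff_bound (hmarg j) (aux_key (hmarg j) hw_int)
          (b.integrable (ν j)) hG hptwise) hGle
      · exact le_trans (aux_diff_bound hmarglim (aux_key hmarglim hw_int)
          (b.integrable νlim) hG hptwise) hGle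
    · -- additivity
      intro w₁ w₂ _ hi₁ hi₂ hP₁ hP₂
      have hrw : ∀ (ρ : Measure (K × Ξ)), ρ.map Prod.fst = μ →
          ∫ p, (w₁ + w₂) p.1 p.2 ∂ρ = (∫ p, w₁ p.1 p.2 ∂ρ) + ∫ p, w₂ p.1 p.2 ∂ρ := by
        intro ρ hm
        rw [← integral_add (aux_key hm hi₁) (aux_key hm hi₂)]
        refine integral_congr_ae (Eventually.of_forall fun p => ?_)
        simp
      rw [hrw νlim hmarglim]
      have : (fun j => ∫ p, (w₁ + w₂) p.1 p.2 ∂(ν j)) =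
          fun j => (∫ p, w₁ p.1 p.2 ∂(ν j)) + ∫ p, w₂ p.1 p.2 ∂(ν j) :=
        funext fun j => hrw (ν j) (hmarg j)
      rw [this]
      exact hP₁.add hP₂
    · -- closedness in L¹
      have hLip : ∀ (ρ : Measure (K × Ξ)) [IsFiniteMeasure ρ], ρ.map Prod.fst = μ →
          ∀ v v' : K →₁[μ] C(Ξ, ℝ),
          |(∫ p, v p.1 p.2 ∂ρ) - ∫ p, v' p.1 p.2 ∂ρ| ≤ dist v v' := by
        intro ρ _ hm v v'
        have hGint : Integrable (fun x => ‖v x - v' x‖) μ :=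
          ((L1.integrable_coeFn v).sub (L1.integrable_coeFn v')).norm
        have hGval : ∫ x, ‖v x - v' x‖ ∂μ = dist v v' := by
          rw [dist_eq_norm, L1.norm_eq_integral_norm]
          refine integral_congr_ae ?_
          filter_upwards [Lp.coeFn_sub v v'] with x hx
          rw [hx]
          simp
        rw [← hGval]
        refine aux_diff_bound hm (aux_key hm (L1.integrable_coeFn v))
          (aux_key hm (L1.integrable_coeFn v')) hGint ?_
        intro p
        have h1 : v p.1 p.2 - v' p.1 p.2 = (v p.1 - v' p.1) p.2 := by simp
        rw [h1]
        simpa [Real.norm_eq_abs] using (v p.1 - v' p.1).norm_coe_le_norm p.2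
      refine IsSeqClosed.isClosed ?_
      intro wseq w hwseq hlim
      simp only [Set.mem_setOf_eq] at hwseq ⊢
      apply aux_squeeze
      intro ε hε
      obtain ⟨n, hn⟩ := Metric.tendsto_atTop.1 hlim ε hε
      have hd : dist (wseq n) w < ε := hn n le_rfl
      refine ⟨fun j => ∫ p, (wseq n : K → C(Ξ, ℝ)) p.1 p.2 ∂(ν j),
        ∫ p, (wseq n : K → C(Ξ, ℝ)) p.1 p.2 ∂νlim, hwseq n, ?_, ?_⟩
      · intro j
        refine le_trans (hLip (ν j) (hmarg j) w (wseq n)) ?_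
        rw [dist_comm]
        exact hd.le
      · refine le_trans (hLip νlim hmarglim w (wseq n)) ?_
        rw [dist_comm]
        exact hd.le
    · -- a.e. invariance
      intro w w' hww' hwint hP
      have hrw : ∀ (ρ : Measure (K × Ξ)), ρ.map Prod.fst = μ →
          ∫ p, w p.1 p.2 ∂ρ = ∫ p, w' p.1 p.2 ∂ρ := by
        intro ρ hm
        refine integral_congr_ae ?_
        filter_upwards [aux_ae hm hww'] with p hp
        rw [hp]
      rw [hrw νlim hmarglim] at hP
      have : (fun j => ∫ p, w p.1 p.2 ∂(ν j)) = fun j => ∫ p, w' p.1 p.2 ∂(ν j) :=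
        funext fun j => hrw (ν j) (hmarg j)
      rw [this] at hP
      exact hP
  exact main huint
end

section
/- Let K be a compact metric space equipped with a finite Borel measure μ, let T > 0, and let t ↦ ν(t) be a map from [0, T] to the set of Young measures on K × [0, 1] relative to μ which is nondecreasing with respect to the order ≼. Then there exists an at most countable set E ⊂ [0, T] such that t ↦ ν(t) is continuous with respect to the narrow topology at every t ∈ [0, T] ∖ E; that is, for every t ∈ [0, T] ∖ E and every sequence s_n → t in [0, T], the measures ν(s_n) converge narrowly to ν(t). -/
open MeasureTheory Filter
open scoped BoundedContinuousFunction

/-- The partial order `ν₁ ≼ ν₂` on Young measures on `K × [0, 1]`: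
`∫ f dν₁ ≤ ∫ f dν₂` for every bounded Borel `f : K × [0, 1] → ℝ` such that `f(x, ·)` is
continuous and nondecreasing on `[0, 1]` for every `x ∈ K`. -/
def YoungLE {K : Type*} [MeasurableSpace K] [TopologicalSpace K]
    (ν₁ ν₂ : Measure (K × Set.Icc (0 : ℝ) 1)) : Prop :=
  ∀ f : K × Set.Icc (0 : ℝ) 1 → ℝ, Measurable f → (∃ C, ∀ p, |f p| ≤ C) →
    (∀ x : K, Continuous fun ξ : Set.Icc (0 : ℝ) 1 => f (x, ξ)) →
    (∀ x : K, Monotone fun ξ : Set.Icc (0 : ℝ) 1 => f (x, ξ)) →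
    ∫ p, f p ∂ν₁ ≤ ∫ p, f p ∂ν₂

section InfConv

variable {K : Type*} [MetricSpace K] [CompactSpace K]

/-- Inf-convolution in order to approximate a continuous function on `K × [0,1]` by functions
that are `n`-Lipschitz in the second variable. -/
noncomputable def ymPhi (g : C(K × Set.Icc (0 : ℝ) 1, ℝ)) (n : ℕ)
    (p : K × Set.Icc (0 : ℝ) 1) : ℝ :=
  ⨅ η : Set.Icc (0 : ℝ) 1, (g (p.1, η) + n * |(p.2 : ℝ) - (η : ℝ)|)

lemma ymPhi_bddBelow (g : C(K × Set.Icc (0 : ℝ) 1, ℝ)) (n : ℕ) (p : K × Set.Icc (0 : ℝ) 1) :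
    BddBelow (Set.range fun η : Set.Icc (0 : ℝ) 1 =>
      g (p.1, η) + n * |(p.2 : ℝ) - (η : ℝ)|) := by
  refine ⟨-‖g‖, ?_⟩
  rintro _ ⟨η, rfl⟩
  show -‖g‖ ≤ g (p.1, η) + n * |(p.2 : ℝ) - (η : ℝ)|
  have h1 : |g (p.1, η)| ≤ ‖g‖ := by
    have := g.norm_coe_le_norm (p.1, η)
    rwa [Real.norm_eq_abs] at this
  have h2 : (0 : ℝ) ≤ n * |(p.2 : ℝ) - (η : ℝ)| := by positivity
  have := (abs_le.mp h1).1
  linarith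

lemma ymPhi_le (g : C(K × Set.Icc (0 : ℝ) 1, ℝ)) (n : ℕ) (p : K × Set.Icc (0 : ℝ) 1) :
    ymPhi g n p ≤ g p := by
  have := ciInf_le (ymPhi_bddBelow g n p) p.2
  simp at this; exact this

lemma neg_norm_le_ymPhi (g : C(K × Set.Icc (0 : ℝ) 1, ℝ)) (n : ℕ) (p : K × Set.Icc (0 : ℝ) 1) :
    -‖g‖ ≤ ymPhi g n p := by
  apply le_ciInf
  intro η
  show -‖g‖ ≤ g (p.1, η) + n * |(p.2 : ℝ) - (η : ℝ)|
  have h1 : |g (p.1, η)| ≤ ‖g‖ := by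
    have := g.norm_coe_le_norm (p.1, η)
    rwa [Real.norm_eq_abs] at this
  have h2 : (0 : ℝ) ≤ n * |(p.2 : ℝ) - (η : ℝ)| := by positivity
  have := (abs_le.mp h1).1
  linarith

lemma ymPhi_le_shift (g : C(K × Set.Icc (0 : ℝ) 1, ℝ)) (n : ℕ)
    {p q : K × Set.Icc (0 : ℝ) 1} {c : ℝ}
    (hc : ∀ η : Set.Icc (0 : ℝ) 1, g (p.1, η) ≤ g (q.1, η) + c) :
    ymPhi g n p ≤ ymPhi g n q + c + n * |(p.2 : ℝ) - (q.2 : ℝ)| := by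
  have h2 : ymPhi g n p - (c + n * |(p.2 : ℝ) - (q.2 : ℝ)|) ≤ ymPhi g n q := by
    apply le_ciInf
    intro η
    have h3 : ymPhi g n p ≤ g (p.1, η) + n * |(p.2 : ℝ) - (η : ℝ)| :=
      ciInf_le (ymPhi_bddBelow g n p) η
    have h4 := hc η
    have h5 : |(p.2 : ℝ) - (η : ℝ)| ≤ |(p.2 : ℝ) - (q.2 : ℝ)| + |(q.2 : ℝ) - (η : ℝ)| :=
      abs_sub_le _ _ _
    have h6 := mul_le_mul_of_nonneg_left h5 (Nat.cast_nonneg (α := ℝ) n)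
    linarith [mul_add (n : ℝ) |(p.2 : ℝ) - (q.2 : ℝ)| |(q.2 : ℝ) - (η : ℝ)|]
  linarith

lemma ymPhi_continuous (g : C(K × Set.Icc (0 : ℝ) 1, ℝ)) (n : ℕ) :
    Continuous (ymPhi g n) := by
  rw [Metric.continuous_iff]
  intro p ε hε
  obtain ⟨δ, hδ, hδ'⟩ := Metric.uniformContinuous_iff.mp
    (CompactSpace.uniformContinuous_of_continuous g.continuous) (ε / 4) (by positivity)
  refine ⟨min δ (ε / (4 * (n + 1))), by positivity, fun q hq => ?_⟩
  have key : ∀ a b : K × Set.Icc (0 : ℝ) 1, dist a b < min δ (ε / (4 * (n + 1))) →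
      ymPhi g n a ≤ ymPhi g n b + ε / 2 := by
    intro a b hab
    have hab1 : dist a.1 b.1 < δ := lt_of_le_of_lt (le_trans (le_max_left _ _) (le_of_eq rfl))
      (lt_of_lt_of_le hab (min_le_left _ _))
    have hc : ∀ η : Set.Icc (0 : ℝ) 1, g (a.1, η) ≤ g (b.1, η) + ε / 4 := by
      intro η
      have hd : dist ((a.1, η) : K × Set.Icc (0 : ℝ) 1) (b.1, η) < δ := by
        rw [dist_prod_same_right]; exact hab1
      have := hδ' hd
      rw [Real.dist_eq] at this
      have := (abs_le.mp this.le).2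
      linarith
    have hshift := ymPhi_le_shift g n hc
    have hd2 : |(a.2 : ℝ) - (b.2 : ℝ)| < ε / (4 * (n + 1)) := by
      have : dist a.2 b.2 ≤ dist a b := le_trans (le_max_right _ _) (le_of_eq rfl)
      have h := lt_of_le_of_lt this (lt_of_lt_of_le hab (min_le_right _ _))
      rwa [Subtype.dist_eq, Real.dist_eq] at h
    have hn1 : (0 : ℝ) < n + 1 := by positivity
    have : (n : ℝ) * |(a.2 : ℝ) - (b.2 : ℝ)| ≤ ε / 4 := by
      have h1 : (n : ℝ) * |(a.2 : ℝ) - (b.2 : ℝ)| ≤ (n + 1) * (ε / (4 * (n + 1))) := by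
        apply mul_le_mul (by linarith) hd2.le (abs_nonneg _) (by linarith)
      have h2 : ((n : ℝ) + 1) * (ε / (4 * (n + 1))) = ε / 4 := by
        field_simp
      linarith
    linarith
  rw [Real.dist_eq, abs_sub_lt_iff]
  constructor
  · have := key q p hq; linarith
  · have := key p q (by rwa [dist_comm]); linarith

lemma ymPhi_approx (g : C(K × Set.Icc (0 : ℝ) 1, ℝ)) {ε : ℝ} (hε : 0 < ε) :
    ∃ n : ℕ, ∀ p, g p - ε ≤ ymPhi g n p := by
  obtain ⟨δ, hδ, hδ'⟩ := Metric.uniformContinuous_iff.mp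
    (CompactSpace.uniformContinuous_of_continuous g.continuous) ε hε
  obtain ⟨n, hn⟩ := exists_nat_ge (2 * ‖g‖ / δ)
  refine ⟨n, fun p => le_ciInf fun η => ?_⟩
  show g p - ε ≤ g (p.1, η) + n * |(p.2 : ℝ) - (η : ℝ)|
  have hb : |g p| ≤ ‖g‖ := by
    have := g.norm_coe_le_norm p
    rwa [Real.norm_eq_abs] at this
  by_cases h : |(p.2 : ℝ) - (η : ℝ)| < δ
  · have hd : dist ((p.1, η) : K × Set.Icc (0 : ℝ) 1) p < δ := by
      have : dist ((p.1, η) : K × Set.Icc (0 : ℝ) 1) (p.1, p.2) < δ := by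
        rw [dist_prod_same_left, Subtype.dist_eq, Real.dist_eq, abs_sub_comm]
        exact h
      simpa using this
    have := hδ' hd
    rw [Real.dist_eq] at this
    have h1 := (abs_le.mp this.le).1
    have h2 : (0 : ℝ) ≤ n * |(p.2 : ℝ) - (η : ℝ)| := by positivity
    linarith
  · push_neg at h
    have hb2 : |g (p.1, η)| ≤ ‖g‖ := by
      have := g.norm_coe_le_norm (p.1, η)
      rwa [Real.norm_eq_abs] at this
    have h1 : 2 * ‖g‖ ≤ (n : ℝ) * δ := by
      rw [div_le_iff₀ hδ] at hn
      linarith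
    have h2 : (n : ℝ) * δ ≤ n * |(p.2 : ℝ) - (η : ℝ)| :=
      mul_le_mul_of_nonneg_left h (Nat.cast_nonneg _)
    have h3 := (abs_le.mp hb2).1
    have h4 := (abs_le.mp hb).2
    linarith

end InfConv

section H

variable {K : Type*} [MetricSpace K] [CompactSpace K]

/-- The monotone-in-`ξ` auxiliary test function `ymPhi g n + n ξ`. -/
noncomputable def ymH (g : C(K × Set.Icc (0 : ℝ) 1, ℝ)) (n : ℕ)
    (p : K × Set.Icc (0 : ℝ) 1) : ℝ :=
  ymPhi g n p + n * (p.2 : ℝ)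

lemma ymH_continuous (g : C(K × Set.Icc (0 : ℝ) 1, ℝ)) (n : ℕ) : Continuous (ymH g n) :=
  (ymPhi_continuous g n).add (continuous_const.mul (continuous_subtype_val.comp continuous_snd))

lemma ymH_bound (g : C(K × Set.Icc (0 : ℝ) 1, ℝ)) (n : ℕ) (p : K × Set.Icc (0 : ℝ) 1) :
    |ymH g n p| ≤ ‖g‖ + n := by
  have h1 := ymPhi_le g n p
  have h2 := neg_norm_le_ymPhi g n p
  have h3 : |g p| ≤ ‖g‖ := by
    have := g.norm_coe_le_norm p; rwa [Real.norm_eq_abs] at this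
  have h4 : (0 : ℝ) ≤ (p.2 : ℝ) := p.2.2.1
  have h5 : (p.2 : ℝ) ≤ 1 := p.2.2.2
  have h6 : (0 : ℝ) ≤ (n : ℝ) * (p.2 : ℝ) := by positivity
  have h7 : (n : ℝ) * (p.2 : ℝ) ≤ n := by nlinarith [Nat.cast_nonneg (α := ℝ) n]
  have h8 := (abs_le.mp h3).2
  rw [ymH, abs_le]
  constructor <;> nlinarith [Nat.cast_nonneg (α := ℝ) n]

lemma ymH_monotone_snd (g : C(K × Set.Icc (0 : ℝ) 1, ℝ)) (n : ℕ) (x : K) :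
    Monotone fun ξ : Set.Icc (0 : ℝ) 1 => ymH g n (x, ξ) := by
  intro ξ ξ' hξ
  have hcc : (ξ : ℝ) ≤ (ξ' : ℝ) := Subtype.coe_le_coe.mpr hξ
  have hc0 : ∀ η : Set.Icc (0 : ℝ) 1,
      g (((x, ξ) : K × Set.Icc (0 : ℝ) 1).1, η) ≤ g (((x, ξ') : K × Set.Icc (0 : ℝ) 1).1, η) + 0 :=
    fun η => by simp
  have hshift := ymPhi_le_shift g n (p := (x, ξ)) (q := (x, ξ')) hc0
  have habs : |(ξ : ℝ) - (ξ' : ℝ)| = (ξ' : ℝ) - (ξ : ℝ) := by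
    rw [abs_sub_comm, abs_of_nonneg (by linarith)]
  simp only [habs] at hshift
  show ymH g n (x, ξ) ≤ ymH g n (x, ξ')
  rw [ymH, ymH]
  simp only at hshift ⊢
  nlinarith [Nat.cast_nonneg (α := ℝ) n]

end H

/-- A map `t ↦ ν(t)` from `[0, T]` to the Young measures on `K × [0, 1]` relative to `μ`,
nondecreasing with respect to `≼`, is continuous for the narrow topology outside an at
most countable set `E ⊆ [0, T]`. -/
theorem monotone_young_measures_continuous_outside_countable
    {K : Type*} [MetricSpace K] [CompactSpace K] [MeasurableSpace K] [BorelSpace K]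
    (μ : Measure K) [IsFiniteMeasure μ] (T : ℝ) (hT : 0 < T)
    (ν : ℝ → Measure (K × Set.Icc (0 : ℝ) 1))
    (hmarg : ∀ t ∈ Set.Icc (0 : ℝ) T, (ν t).map Prod.fst = μ)
    (hmono : ∀ s ∈ Set.Icc (0 : ℝ) T, ∀ t ∈ Set.Icc (0 : ℝ) T, s ≤ t →
      YoungLE (ν s) (ν t)) :
    ∃ E : Set ℝ, E.Countable ∧ E ⊆ Set.Icc (0 : ℝ) T ∧
      ∀ t ∈ Set.Icc (0 : ℝ) T \ E, ∀ s : ℕ → ℝ,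
        (∀ n, s n ∈ Set.Icc (0 : ℝ) T) → Tendsto s atTop (nhds t) →
          ∀ f : K × Set.Icc (0 : ℝ) 1 →ᵇ ℝ,
            Tendsto (fun n => ∫ p, f p ∂(ν (s n))) atTop (nhds (∫ p, f p ∂(ν t))) := by
  classical
  have hT' : (0 : ℝ) ≤ T := hT.le
  set c : ℝ → ℝ := fun t => max 0 (min t T) with hcdef
  have hcmem : ∀ t, c t ∈ Set.Icc (0 : ℝ) T := fun t =>
    ⟨le_max_left _ _, max_le hT' (min_le_right _ _)⟩
  have hcmono : Monotone c := fun a b h => max_le_max le_rfl (min_le_min h le_rfl)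
  have hcid : ∀ t ∈ Set.Icc (0 : ℝ) T, c t = t := by
    intro t ht
    simp only [hcdef]
    rw [min_eq_left ht.2, max_eq_right ht.1]
  have hmass : ∀ t ∈ Set.Icc (0 : ℝ) T, (ν t) Set.univ = μ Set.univ := by
    intro t ht
    rw [← hmarg t ht, Measure.map_apply measurable_fst MeasurableSet.univ, Set.preimage_univ]
  have hfin : ∀ t ∈ Set.Icc (0 : ℝ) T, IsFiniteMeasure (ν t) := by
    intro t ht
    exact ⟨by rw [hmass t ht]; exact measure_lt_top μ _⟩
  obtain ⟨D, hDc, hDd⟩ := TopologicalSpace.exists_countable_dense C(K × Set.Icc (0 : ℝ) 1, ℝ)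
  set Ψ : (K × Set.Icc (0 : ℝ) 1) → ℝ := fun p => (p.2 : ℝ) with hΨdef
  have hΨcont : Continuous Ψ := continuous_subtype_val.comp continuous_snd
  set J : ((K × Set.Icc (0 : ℝ) 1) → ℝ) → ℝ → ℝ :=
    fun h t => ∫ p, h p ∂(ν (c t)) with hJdef
  have hJmono : ∀ h : (K × Set.Icc (0 : ℝ) 1) → ℝ, Measurable h → (∃ C, ∀ p, |h p| ≤ C) →
      (∀ x, Continuous fun ξ : Set.Icc (0 : ℝ) 1 => h (x, ξ)) →
      (∀ x, Monotone fun ξ : Set.Icc (0 : ℝ) 1 => h (x, ξ)) →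
      Monotone (J h) := by
    intro h h1 h2 h3 h4 a b hab
    exact hmono (c a) (hcmem a) (c b) (hcmem b) (hcmono hab) h h1 h2 h3 h4
  have hHgood : ∀ g : C(K × Set.Icc (0 : ℝ) 1, ℝ), ∀ n : ℕ, Monotone (J (ymH g n)) := by
    intro g n
    apply hJmono
    · exact (ymH_continuous g n).measurable
    · exact ⟨‖g‖ + n, ymH_bound g n⟩
    · intro x
      exact (ymH_continuous g n).comp (Continuous.prodMk_right x)
    · exact ymH_monotone_snd g n
  have hΨgood : Monotone (J Ψ) := by
    apply hJmono
    · exact hΨcont.measurable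
    · exact ⟨1, fun p => by rw [hΨdef, abs_of_nonneg p.2.2.1]; exact p.2.2.2⟩
    · intro x; exact continuous_subtype_val
    · intro x ξ ξ' h; exact Subtype.coe_le_coe.mpr h
  refine ⟨Set.Icc 0 T ∩ ((⋃ g ∈ D, ⋃ n : ℕ, {t | ¬ContinuousAt (J (ymH g n)) t}) ∪
    {t | ¬ContinuousAt (J Ψ) t}), ?_, Set.inter_subset_left, ?_⟩
  · apply Set.Countable.mono Set.inter_subset_right
    exact (hDc.biUnion fun g _ => Set.countable_iUnion fun n =>
      (hHgood g n).countable_not_continuousAt).union hΨgood.countable_not_continuousAt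
  intro t ht s hs hst f
  obtain ⟨ht1, ht2⟩ := ht
  have htH : ∀ g ∈ D, ∀ n : ℕ, ContinuousAt (J (ymH g n)) t := by
    intro g hg n
    by_contra hcon
    exact ht2 ⟨ht1, Or.inl (Set.mem_biUnion hg (Set.mem_iUnion.2 ⟨n, hcon⟩))⟩
  have htΨ : ContinuousAt (J Ψ) t := by
    by_contra hcon
    exact ht2 ⟨ht1, Or.inr hcon⟩
  have integ : ∀ h : (K × Set.Icc (0 : ℝ) 1) → ℝ, Continuous h →
      ∀ u ∈ Set.Icc (0 : ℝ) T, Integrable h (ν u) := by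
    intro h hh u hu
    haveI := hfin u hu
    exact BoundedContinuousFunction.integrable _ (BoundedContinuousFunction.mkOfCompact ⟨h, hh⟩)
  rw [Metric.tendsto_atTop]
  intro ε hε
  set M := (μ Set.univ).toReal with hMdef
  have hM : 0 ≤ M := ENNReal.toReal_nonneg
  set ε₁ := ε / (4 * M + 2) with hε₁def
  have hε₁ : 0 < ε₁ := by positivity
  obtain ⟨g, hgD, hg⟩ := hDd.exists_dist_lt f.toContinuousMap hε₁
  obtain ⟨n, hn⟩ := ymPhi_approx g hε₁
  have hpt : ∀ p, |f p - ymPhi g n p| ≤ 2 * ε₁ := by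
    intro p
    have h1 : |f p - g p| ≤ ε₁ := by
      have h0 := ContinuousMap.dist_apply_le_dist (f := f.toContinuousMap) (g := g) p
      rw [Real.dist_eq] at h0
      simpa using h0.trans hg.le
    have h2 := ymPhi_le g n p
    have h3 := hn p
    have h5 := abs_sub_le (f p) (g p) (ymPhi g n p)
    have h4 : |g p - ymPhi g n p| ≤ ε₁ := by rw [abs_le]; constructor <;> linarith
    linarith
  have hbd : ∀ u ∈ Set.Icc (0 : ℝ) T,
      |∫ p, f p ∂(ν u) - ∫ p, ymPhi g n p ∂(ν u)| ≤ 2 * ε₁ * M := by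
    intro u hu
    haveI := hfin u hu
    rw [← integral_sub (integ f f.continuous u hu) (integ _ (ymPhi_continuous g n) u hu)]
    have hnorm := norm_integral_le_of_norm_le_const (μ := ν u)
      (f := fun p => f p - ymPhi g n p) (C := 2 * ε₁)
      (Eventually.of_forall fun p => by rw [Real.norm_eq_abs]; exact hpt p)
    rw [Real.norm_eq_abs] at hnorm
    calc |∫ p, (f p - ymPhi g n p) ∂(ν u)| ≤ 2 * ε₁ * ((ν u) Set.univ).toReal := hnorm
      _ = 2 * ε₁ * M := by rw [hmass u hu]
  have hsplit : ∀ u ∈ Set.Icc (0 : ℝ) T,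
      ∫ p, ymPhi g n p ∂(ν u) = J (ymH g n) u - n * J Ψ u := by
    intro u hu
    haveI := hfin u hu
    simp only [hJdef, hcid u hu, hΨdef]
    have : ∀ p : K × Set.Icc (0 : ℝ) 1, ymH g n p = ymPhi g n p + n * (p.2 : ℝ) := fun p => rfl
    rw [show (fun p : K × Set.Icc (0 : ℝ) 1 => ymH g n p) =
      (fun p : K × Set.Icc (0 : ℝ) 1 => ymPhi g n p + n * (p.2 : ℝ)) from rfl]
    rw [integral_add (integ _ (ymPhi_continuous g n) u hu)
      (integ (fun p : K × Set.Icc (0 : ℝ) 1 => (n : ℝ) * (p.2 : ℝ)) (continuous_const.mul hΨcont) u hu)]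
    rw [integral_const_mul]
    ring
  have htend : Tendsto (fun k => ∫ p, ymPhi g n p ∂(ν (s k))) atTop
      (nhds (∫ p, ymPhi g n p ∂(ν t))) := by
    have h1 : Tendsto (fun k => J (ymH g n) (s k)) atTop (nhds (J (ymH g n) t)) :=
      ((htH g hgD n).tendsto).comp hst
    have h2 : Tendsto (fun k => (n : ℝ) * J Ψ (s k)) atTop (nhds ((n : ℝ) * J Ψ t)) :=
      (htΨ.tendsto.comp hst).const_mul _
    have h3 := h1.sub h2
    have e1 : (fun k => J (ymH g n) (s k) - (n : ℝ) * J Ψ (s k)) =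
        fun k => ∫ p, ymPhi g n p ∂(ν (s k)) := by
      funext k; rw [hsplit (s k) (hs k)]
    have e2 : ∫ p, ymPhi g n p ∂(ν t) = J (ymH g n) t - (n : ℝ) * J Ψ t := hsplit t ht1
    rw [e2, ← e1]
    exact h3
  obtain ⟨N, hN⟩ := Metric.tendsto_atTop.mp htend ε₁ hε₁
  refine ⟨N, fun k hk => ?_⟩
  have h1 := hbd (s k) (hs k)
  have h2 := hbd t ht1
  have h3 := hN k hk
  rw [Real.dist_eq] at h3 ⊢
  have tri1 := abs_sub_le (∫ p, f p ∂(ν (s k))) (∫ p, ymPhi g n p ∂(ν (s k))) (∫ p, f p ∂(ν t))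
  have tri2 := abs_sub_le (∫ p, ymPhi g n p ∂(ν (s k))) (∫ p, ymPhi g n p ∂(ν t)) (∫ p, f p ∂(ν t))
  have h2' : |∫ p, ymPhi g n p ∂(ν t) - ∫ p, f p ∂(ν t)| ≤ 2 * ε₁ * M := by
    rw [abs_sub_comm]; exact h2
  have hfeq : ε₁ * (4 * M + 2) = ε := by
    rw [hε₁def]; field_simp
  linarith
end

section
/- Let (X, μ) be a finite measure space and let κ₁, κ₂ be Markov kernels from X to ℝ, with associated Young measures ν_i = μ ⊗ κ_i on X × ℝ (i.e. ν_i(A × B) = ∫_A κ_i(x)(B) dμ(x) for Borel sets A ⊆ X, B ⊆ ℝ). Then the following are equivalent: (i) for every bounded measurable function f : X × ℝ → ℝ such that f(x, ·) is continuous and nondecreasing for every x ∈ X, one has ∫ f dν₁ ≤ ∫ f dν₂; (ii) for μ-a.e. x ∈ X, the cumulative distribution functions satisfy κ₁(x)((−∞, ξ]) ≥ κ₂(x)((−∞, ξ]) for every ξ ∈ ℝ. -/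
open MeasureTheory ProbabilityTheory Set Filter

/-- Upper level sets of monotone continuous functions have comparable measures under
first-order stochastic dominance expressed through CDFs. -/
lemma meas_gt_le_of_cdf_ge {p q : Measure ℝ} [IsProbabilityMeasure p] [IsProbabilityMeasure q]
    (hcdf : ∀ ξ : ℝ, q (Set.Iic ξ) ≤ p (Set.Iic ξ))
    {h : ℝ → ℝ} (hc : Continuous h) (hm : Monotone h) (s : ℝ) :
    p {ξ | s < h ξ} ≤ q {ξ | s < h ξ} := by
  set U : Set ℝ := {ξ | s < h ξ} with hUdef
  by_cases hUe : U = ∅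
  · simp [hUe]
  by_cases hUu : U = univ
  · simp [hUu]
  obtain ⟨z, hz⟩ := (Set.ne_univ_iff_exists_notMem U).mp hUu
  have hzle : h z ≤ s := not_lt.mp hz
  have hUne : U.Nonempty := Set.nonempty_iff_ne_empty.mpr hUe
  have hbdd : BddBelow U := by
    refine ⟨z, fun ξ hξ => ?_⟩
    by_contra hlt
    exact absurd (lt_of_le_of_lt (hm (le_of_not_ge hlt)) (lt_of_le_of_lt hzle hξ)) (lt_irrefl _)
  have hUopen : IsOpen U := isOpen_Ioi.preimage hc
  have hUeq : U = Set.Ioi (sInf U) := by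
    ext ξ
    constructor
    · intro hξ
      obtain ⟨ε, hε, hball⟩ := Metric.isOpen_iff.mp hUopen ξ hξ
      have hmem : ξ - ε / 2 ∈ U := by
        apply hball
        rw [Metric.mem_ball, Real.dist_eq]
        have : |ξ - ε / 2 - ξ| = ε / 2 := by
          rw [show ξ - ε / 2 - ξ = -(ε / 2) by ring, abs_neg, abs_of_nonneg (by linarith)]
        rw [this]; linarith
      have := csInf_le hbdd hmem
      have : sInf U ≤ ξ - ε / 2 := this
      simp only [Set.mem_Ioi]
      linarith
    · intro hξ
      obtain ⟨u, huU, hu⟩ := exists_lt_of_csInf_lt hUne hξ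
      exact lt_of_lt_of_le huU (hm hu.le)
  have key : ∀ (r : Measure ℝ) [IsProbabilityMeasure r],
      r (Set.Ioi (sInf U)) = 1 - r (Set.Iic (sInf U)) := by
    intro r _
    rw [← Set.compl_Iic, measure_compl measurableSet_Iic (measure_ne_top _ _), measure_univ]
  rw [hUeq, key p, key q]
  exact tsub_le_tsub_left (hcdf (sInf U)) 1

/-- Integrals of bounded monotone continuous functions respect first-order stochastic
dominance expressed through CDFs. -/
lemma integral_mono_of_cdf_ge {p q : Measure ℝ} [IsProbabilityMeasure p] [IsProbabilityMeasure q]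
    (hcdf : ∀ ξ : ℝ, q (Set.Iic ξ) ≤ p (Set.Iic ξ))
    {h : ℝ → ℝ} {C : ℝ} (hb : ∀ ξ, |h ξ| ≤ C) (hc : Continuous h) (hm : Monotone h) :
    ∫ ξ, h ξ ∂p ≤ ∫ ξ, h ξ ∂q := by
  set g : ℝ → ℝ := fun ξ => h ξ + C with hgdef
  have hg0 : ∀ ξ, 0 ≤ g ξ := fun ξ => by have := abs_le.mp (hb ξ); simp only [hgdef]; linarith
  have hg2C : ∀ ξ, g ξ ≤ 2 * C := fun ξ => by have := abs_le.mp (hb ξ); simp only [hgdef]; linarith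
  have hgc : Continuous g := hc.add continuous_const
  have hint : ∀ (r : Measure ℝ) [IsProbabilityMeasure r], Integrable h r := by
    intro r _
    refine ⟨hc.aestronglyMeasurable, HasFiniteIntegral.of_bounded (C := C) ?_⟩
    exact ae_of_all _ fun ξ => by simpa [Real.norm_eq_abs] using hb ξ
  have key : ∀ (r : Measure ℝ) [IsProbabilityMeasure r],
      ∫ ξ, g ξ ∂r = (∫⁻ ξ, ENNReal.ofReal (g ξ) ∂r).toReal := by
    intro r _
    exact integral_eq_lintegral_of_nonneg_ae (ae_of_all _ hg0) hgc.aestronglyMeasurable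
  have layer : ∀ (r : Measure ℝ) [IsProbabilityMeasure r],
      ∫⁻ ξ, ENNReal.ofReal (g ξ) ∂r = ∫⁻ t in Set.Ioi (0:ℝ), r {a : ℝ | t < g a} := by
    intro r _
    exact lintegral_eq_lintegral_meas_lt r (ae_of_all _ hg0) hgc.measurable.aemeasurable
  have hlin : ∫⁻ ξ, ENNReal.ofReal (g ξ) ∂p ≤ ∫⁻ ξ, ENNReal.ofReal (g ξ) ∂q := by
    rw [layer p, layer q]
    refine lintegral_mono fun t => ?_
    have hset : {a : ℝ | t < g a} = {a : ℝ | t - C < h a} := by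
      ext a; simp only [Set.mem_setOf_eq, hgdef]; constructor <;> intro <;> linarith
    rw [hset]
    exact meas_gt_le_of_cdf_ge hcdf hc hm (t - C)
  have hfin : ∫⁻ ξ, ENNReal.ofReal (g ξ) ∂q ≠ ⊤ := by
    refine ne_top_of_le_ne_top (b := ENNReal.ofReal (2 * C)) ?_ ?_
    · exact ENNReal.ofReal_ne_top
    · calc ∫⁻ ξ, ENNReal.ofReal (g ξ) ∂q ≤ ∫⁻ _, ENNReal.ofReal (2 * C) ∂q :=
            lintegral_mono fun ξ => ENNReal.ofReal_le_ofReal (hg2C ξ)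
        _ = ENNReal.ofReal (2 * C) := by simp
  have hgle : ∫ ξ, g ξ ∂p ≤ ∫ ξ, g ξ ∂q := by
    rw [key p, key q]
    exact ENNReal.toReal_mono hfin hlin
  have hsplit : ∀ (r : Measure ℝ) [IsProbabilityMeasure r],
      ∫ ξ, g ξ ∂r = (∫ ξ, h ξ ∂r) + C := by
    intro r _
    rw [hgdef]
    rw [integral_add (hint r) (integrable_const C), integral_const]
    simp
  rw [hsplit p, hsplit q] at hgle
  linarith

/-- Piecewise-linear approximations of the indicator of `Set.Ioi r`. -/
noncomputable def stepFn (r : ℚ) (n : ℕ) : ℝ → ℝ :=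
  fun ξ => min 1 (max 0 ((n + 1 : ℝ) * (ξ - r)))

lemma stepFn_continuous (r : ℚ) (n : ℕ) : Continuous (stepFn r n) := by
  unfold stepFn; fun_prop

lemma stepFn_monotone (r : ℚ) (n : ℕ) : Monotone (stepFn r n) := by
  intro a b hab
  unfold stepFn
  exact min_le_min le_rfl (max_le_max le_rfl (by nlinarith [Nat.cast_nonneg (α := ℝ) n]))

lemma stepFn_nonneg (r : ℚ) (n : ℕ) (ξ : ℝ) : 0 ≤ stepFn r n ξ :=
  le_min zero_le_one (le_max_left _ _)

lemma stepFn_le_one (r : ℚ) (n : ℕ) (ξ : ℝ) : stepFn r n ξ ≤ 1 := min_le_left _ _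

lemma stepFn_abs_le (r : ℚ) (n : ℕ) (ξ : ℝ) : |stepFn r n ξ| ≤ 1 :=
  abs_le.mpr ⟨by linarith [stepFn_nonneg r n ξ], stepFn_le_one r n ξ⟩

lemma stepFn_tendsto (r : ℚ) (ξ : ℝ) :
    Filter.Tendsto (fun n => stepFn r n ξ) Filter.atTop
      (nhds (Set.indicator (Set.Ioi (r : ℝ)) (1 : ℝ → ℝ) ξ)) := by
  by_cases hξ : (r : ℝ) < ξ
  · rw [Set.indicator_of_mem (show ξ ∈ Set.Ioi (r:ℝ) from hξ), Pi.one_apply]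
    obtain ⟨N, hN⟩ := exists_nat_ge (1 / (ξ - r))
    have hpos : (0 : ℝ) < ξ - r := by linarith
    apply Filter.Tendsto.congr' (f₁ := fun _ => (1 : ℝ))
    · filter_upwards [Filter.eventually_ge_atTop N] with n hn
      have h1 : (1 : ℝ) ≤ (n + 1 : ℝ) * (ξ - r) := by
        have : (N : ℝ) ≤ (n : ℝ) := by exact_mod_cast hn
        have h2 : 1 / (ξ - r) ≤ (n + 1 : ℝ) := by linarith
        rw [div_le_iff₀ hpos] at h2
        linarith
      unfold stepFn
      rw [max_eq_right (by linarith), min_eq_left h1]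
    · exact tendsto_const_nhds
  · rw [Set.indicator_of_notMem (show ξ ∉ Set.Ioi (r:ℝ) from hξ)]
    have : ∀ n : ℕ, stepFn r n ξ = 0 := by
      intro n
      unfold stepFn
      have hξ' : ξ - r ≤ 0 := by simp only [Set.mem_Ioi, not_lt] at hξ; linarith
      rw [max_eq_left (mul_nonpos_of_nonneg_of_nonpos (by positivity) hξ'), min_eq_right zero_le_one]
    simp only [this]
    exact tendsto_const_nhds

lemma integral_stepFn_tendsto (r : ℚ) (p : Measure ℝ) [IsProbabilityMeasure p] :
    Filter.Tendsto (fun n => ∫ ξ, stepFn r n ξ ∂p) Filter.atTop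
      (nhds ((p (Set.Ioi (r : ℝ))).toReal)) := by
  have := MeasureTheory.tendsto_integral_of_dominated_convergence
    (F := fun n ξ => stepFn r n ξ)
    (f := Set.indicator (Set.Ioi (r : ℝ)) (1 : ℝ → ℝ))
    (bound := fun _ => (1 : ℝ)) (μ := p)
    (fun n => (stepFn_continuous r n).aestronglyMeasurable)
    (integrable_const 1)
    (fun n => ae_of_all _ fun ξ => by simpa [Real.norm_eq_abs] using stepFn_abs_le r n ξ)
    (ae_of_all _ fun ξ => stepFn_tendsto r ξ)
  rwa [integral_indicator_one measurableSet_Ioi] at this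

/-- From comparison of integrals of all step functions, deduce CDF comparison. -/
lemma cdf_ge_of_stepFn_integrals {p q : Measure ℝ}
    [IsProbabilityMeasure p] [IsProbabilityMeasure q]
    (H : ∀ (r : ℚ) (n : ℕ), ∫ ξ, stepFn r n ξ ∂p ≤ ∫ ξ, stepFn r n ξ ∂q) :
    ∀ ξ : ℝ, q (Set.Iic ξ) ≤ p (Set.Iic ξ) := by
  have hIoi : ∀ r : ℚ, p (Set.Ioi (r : ℝ)) ≤ q (Set.Ioi (r : ℝ)) := by
    intro r
    have := le_of_tendsto_of_tendsto' (integral_stepFn_tendsto r p)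
      (integral_stepFn_tendsto r q) (H r)
    exact (ENNReal.toReal_le_toReal (measure_ne_top _ _) (measure_ne_top _ _)).mp this
  have hIic : ∀ r : ℚ, q (Set.Iic (r : ℝ)) ≤ p (Set.Iic (r : ℝ)) := by
    intro r
    have key : ∀ (m : Measure ℝ) [IsProbabilityMeasure m],
        m (Set.Iic (r : ℝ)) = 1 - m (Set.Ioi (r : ℝ)) := by
      intro m _
      rw [← Set.compl_Ioi, measure_compl measurableSet_Ioi (measure_ne_top _ _), measure_univ]
    rw [key p, key q]
    exact tsub_le_tsub_left (hIoi r) 1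
  intro ξ
  -- right-continuity argument
  have hInter : ⋂ n : ℕ, Set.Iic (ξ + 1 / (n + 1)) = Set.Iic ξ := by
    ext x
    simp only [Set.mem_iInter, Set.mem_Iic]
    constructor
    · intro hx
      by_contra hlt
      push_neg at hlt
      obtain ⟨n, hn⟩ := exists_nat_one_div_lt (show (0:ℝ) < x - ξ by linarith)
      have := hx n
      push_cast at this hn ⊢
      linarith
    · intro hx n
      have : (0:ℝ) < 1 / (n + 1) := by positivity
      linarith
  have htend : Filter.Tendsto (fun n : ℕ => p (Set.Iic (ξ + 1 / (n + 1)))) Filter.atTop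
      (nhds (p (Set.Iic ξ))) := by
    have := tendsto_measure_iInter_atTop (μ := p)
      (s := fun n : ℕ => Set.Iic (ξ + 1 / (n + 1)))
      (fun n => measurableSet_Iic.nullMeasurableSet)
      (fun n m hnm => by
        apply Set.Iic_subset_Iic.mpr
        have h1 : (1:ℝ) / (m + 1) ≤ 1 / (n + 1) := by
          apply one_div_le_one_div_of_le (by positivity)
          push_cast
          exact_mod_cast by exact_mod_cast add_le_add_left (Nat.cast_le.mpr hnm) 1
        linarith)
      ⟨0, measure_ne_top _ _⟩
    rwa [hInter] at this
  refine ENNReal.le_of_forall_pos_le_add fun ε hε hfin => ?_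
  have hlt : p (Set.Iic ξ) < p (Set.Iic ξ) + ε := by
    refine ENNReal.lt_add_right (measure_ne_top _ _) ?_
    exact_mod_cast (ENNReal.coe_pos.mpr hε).ne'
  obtain ⟨n, hn⟩ := (htend.eventually_lt_const hlt).exists
  have hpos : (0:ℝ) < 1 / ((n:ℝ) + 1) := by positivity
  obtain ⟨r, hr1, hr2⟩ := exists_rat_btwn (show ξ < ξ + 1 / ((n:ℝ) + 1) by linarith)
  calc q (Set.Iic ξ) ≤ q (Set.Iic (r : ℝ)) := measure_mono (Set.Iic_subset_Iic.mpr hr1.le)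
    _ ≤ p (Set.Iic (r : ℝ)) := hIic r
    _ ≤ p (Set.Iic (ξ + 1 / ((n:ℝ) + 1))) := measure_mono (Set.Iic_subset_Iic.mpr hr2.le)
    _ ≤ p (Set.Iic ξ) + ε := hn.le

/-- Characterisation of the partial order on Young measures `ν_i = μ ⊗ κ_i` associated
with Markov kernels `κ₁, κ₂` from `X` to `ℝ`: `∫ f dν₁ ≤ ∫ f dν₂` holds for every bounded
measurable `f : X × ℝ → ℝ` with `f(x, ·)` continuous and nondecreasing for every `x`, if
and only if for `μ`-a.e. `x` the cumulative distribution functions satisfy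
`F_{κ₁(x)}(ξ) ≥ F_{κ₂(x)}(ξ)` for every `ξ ∈ ℝ`. -/
theorem youngLE_iff_cdf_ge {X : Type*} [MeasurableSpace X]
    (μ : Measure X) [IsFiniteMeasure μ]
    (κ₁ κ₂ : Kernel X ℝ) [IsMarkovKernel κ₁] [IsMarkovKernel κ₂] :
    (∀ f : X × ℝ → ℝ, Measurable f → (∃ C, ∀ p, |f p| ≤ C) →
        (∀ x, Continuous fun ξ => f (x, ξ)) →
        (∀ x, Monotone fun ξ => f (x, ξ)) →
        ∫ p, f p ∂(μ.compProd κ₁) ≤ ∫ p, f p ∂(μ.compProd κ₂)) ↔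
      (∀ᵐ x ∂μ, ∀ ξ : ℝ, κ₂ x (Set.Iic ξ) ≤ κ₁ x (Set.Iic ξ)) := by
  have hφ_meas : ∀ (κ : Kernel X ℝ) [IsMarkovKernel κ] (r : ℚ) (n : ℕ),
      StronglyMeasurable (fun x => ∫ ξ, stepFn r n ξ ∂κ x) := by
    intro κ _ r n
    exact MeasureTheory.StronglyMeasurable.integral_kernel_prod_right'
      (((stepFn_continuous r n).stronglyMeasurable).comp_measurable measurable_snd)
  have hφ_int : ∀ (κ : Kernel X ℝ) [IsMarkovKernel κ] (r : ℚ) (n : ℕ),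
      Integrable (fun x => ∫ ξ, stepFn r n ξ ∂κ x) μ := by
    intro κ _ r n
    refine ⟨(hφ_meas κ r n).aestronglyMeasurable,
      HasFiniteIntegral.of_bounded (C := 1) (ae_of_all _ fun x => ?_)⟩
    calc ‖∫ ξ, stepFn r n ξ ∂κ x‖ ≤ 1 * ((κ x) Set.univ).toReal :=
          norm_integral_le_of_norm_le_const
            (ae_of_all _ fun ξ => by simpa [Real.norm_eq_abs] using stepFn_abs_le r n ξ)
      _ = 1 := by simp
  constructor
  · intro H
    have hae : ∀ (r : ℚ) (n : ℕ), ∀ᵐ x ∂μ,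
        ∫ ξ, stepFn r n ξ ∂κ₁ x ≤ ∫ ξ, stepFn r n ξ ∂κ₂ x := by
      intro r n
      have h0 := ae_nonneg_of_forall_setIntegral_nonneg
        (f := fun x => (∫ ξ, stepFn r n ξ ∂κ₂ x) - (∫ ξ, stepFn r n ξ ∂κ₁ x))
        ((hφ_int κ₂ r n).sub (hφ_int κ₁ r n)) ?_
      · filter_upwards [h0] with x hx
        simpa [sub_nonneg] using hx
      · intro s hs _
        have hfmeas : Measurable (fun p : X × ℝ =>
            (s.indicator (fun _ => (1:ℝ)) p.1) * stepFn r n p.2) :=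
          ((measurable_one.indicator hs).comp measurable_fst).mul
            ((stepFn_continuous r n).measurable.comp measurable_snd)
        have hind : ∀ x : X, 0 ≤ s.indicator (fun _ => (1:ℝ)) x ∧
            s.indicator (fun _ => (1:ℝ)) x ≤ 1 := by
          intro x; by_cases hx : x ∈ s <;> simp [hx]
        have hfb : ∀ p : X × ℝ, |(s.indicator (fun _ => (1:ℝ)) p.1) * stepFn r n p.2| ≤ 1 := by
          intro p
          rw [abs_mul]
          calc |s.indicator (fun _ => (1:ℝ)) p.1| * |stepFn r n p.2| ≤ 1 * 1 := by
                refine mul_le_mul ?_ (stepFn_abs_le r n p.2) (abs_nonneg _) zero_le_one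
                rw [abs_of_nonneg (hind p.1).1]; exact (hind p.1).2
            _ = 1 := by ring
        have hH := H (fun p => (s.indicator (fun _ => (1:ℝ)) p.1) * stepFn r n p.2)
          hfmeas ⟨1, hfb⟩
          (fun x => by exact (continuous_const (y := s.indicator (fun _ => (1:ℝ)) x)).mul (stepFn_continuous r n))
          (fun x a b hab => by
            simp only []
            exact mul_le_mul_of_nonneg_left (stepFn_monotone r n hab) (hind x).1)
        have hintf : ∀ (κ : Kernel X ℝ) [IsMarkovKernel κ],
            Integrable (fun p : X × ℝ =>
              (s.indicator (fun _ => (1:ℝ)) p.1) * stepFn r n p.2) (μ.compProd κ) := by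
          intro κ _
          exact ⟨hfmeas.aestronglyMeasurable, HasFiniteIntegral.of_bounded (C := 1)
            (ae_of_all _ fun p => by rw [Real.norm_eq_abs]; exact hfb p)⟩
        rw [Measure.integral_compProd (hintf κ₁), Measure.integral_compProd (hintf κ₂)] at hH
        have hinner : ∀ (κ : Kernel X ℝ) [IsMarkovKernel κ] (x : X),
            ∫ ξ, (s.indicator (fun _ => (1:ℝ)) x) * stepFn r n ξ ∂κ x
              = s.indicator (fun x => ∫ ξ, stepFn r n ξ ∂κ x) x := by
          intro κ _ x
          by_cases hx : x ∈ s <;> simp [hx]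
        simp only [hinner κ₁, hinner κ₂] at hH
        rw [integral_indicator hs, integral_indicator hs] at hH
        rw [integral_sub ((hφ_int κ₂ r n).integrableOn) ((hφ_int κ₁ r n).integrableOn)]
        linarith
    have hall : ∀ᵐ x ∂μ, ∀ (r : ℚ) (n : ℕ),
        ∫ ξ, stepFn r n ξ ∂κ₁ x ≤ ∫ ξ, stepFn r n ξ ∂κ₂ x := by
      rw [ae_all_iff]
      intro r
      rw [ae_all_iff]
      intro n
      exact hae r n
    filter_upwards [hall] with x hx
    exact cdf_ge_of_stepFn_integrals (p := κ₁ x) (q := κ₂ x) hx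
  · intro hcdf f hfmeas hbound hfcont hfmono
    obtain ⟨C, hC⟩ := hbound
    have hint : ∀ (κ : Kernel X ℝ) [IsMarkovKernel κ], Integrable f (μ.compProd κ) := by
      intro κ _
      exact ⟨hfmeas.aestronglyMeasurable, HasFiniteIntegral.of_bounded (C := C)
        (ae_of_all _ fun p => by simpa [Real.norm_eq_abs] using hC p)⟩
    rw [Measure.integral_compProd (hint κ₁), Measure.integral_compProd (hint κ₂)]
    have hinteg : ∀ (κ : Kernel X ℝ) [IsMarkovKernel κ],
        Integrable (fun x => ∫ ξ, f (x, ξ) ∂κ x) μ := by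
      intro κ _
      refine ⟨(MeasureTheory.StronglyMeasurable.integral_kernel_prod_right'
          hfmeas.stronglyMeasurable).aestronglyMeasurable,
        HasFiniteIntegral.of_bounded (C := C) (ae_of_all _ fun x => ?_)⟩
      calc ‖∫ ξ, f (x, ξ) ∂κ x‖ ≤ C * ((κ x) Set.univ).toReal :=
            norm_integral_le_of_norm_le_const
              (ae_of_all _ fun ξ => by simpa [Real.norm_eq_abs] using hC (x, ξ))
        _ = C := by simp
    refine integral_mono_ae (hinteg κ₁) (hinteg κ₂) ?_
    filter_upwards [hcdf] with x hx
    exact integral_mono_of_cdf_ge hx (fun ξ => hC (x, ξ)) (hfcont x) (hfmono x)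
end
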